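/- arXiv:1401.0157 — 8 statements merged into one kernel-verified Lean document; each statement's English description precedes it below -/
import Mathlib

section
/- For every n ≥ 1, the submonoid of the monoid of all transformations of Q_n = {0,…,n−1} (under composition) generated by the unitary transformations (q→q+1) for 0 ≤ q ≤ n−2 and (q→q−1) for 1 ≤ q ≤ n−1, together with the identity, is equal to the set of all monotone transformations of Q_n (i.e., all t with p ≤ q implying t(p) ≤ t(q)). -/
/-- The unitary transformation `(p→q)`: sends `p` to `q` and fixes every other element. -/
def unitaryT {Q : Type*} [DecidableEq Q] (p q : Q) : Function.End Q :=
  fun r => if r = p then q else r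

private abbrev genSet (n : ℕ) : Set (Function.End (Fin n)) :=
  {f : Function.End (Fin n) |
    ∃ p q : Fin n, ((q : ℕ) = (p : ℕ) + 1 ∨ (p : ℕ) = (q : ℕ) + 1) ∧ f = unitaryT p q}

private lemma unitary_mono {n : ℕ} (p q : Fin n)
    (h : (q : ℕ) = (p : ℕ) + 1 ∨ (p : ℕ) = (q : ℕ) + 1) :
    Monotone (unitaryT p q) := by
  intro x y hxy
  have hxy' : (x : ℕ) ≤ (y : ℕ) := hxy
  simp only [unitaryT]
  split_ifs with h1 h2 h2
  · exact le_refl _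
  · have hy : (y : ℕ) ≠ (p : ℕ) := fun hh => h2 (Fin.ext hh)
    have hx : (x : ℕ) = (p : ℕ) := by rw [h1]
    rw [Fin.le_def]; omega
  · have hx : (x : ℕ) ≠ (p : ℕ) := fun hh => h1 (Fin.ext hh)
    have hy : (y : ℕ) = (p : ℕ) := by rw [h2]
    rw [Fin.le_def]; omega
  · exact hxy

private lemma mem_closure_of_monotone {n : ℕ} :
    ∀ (N : ℕ) (f : Function.End (Fin n)),
      (∑ i : Fin n, Nat.dist (f i : ℕ) (i : ℕ)) = N → Monotone f →
      f ∈ Submonoid.closure (genSet n) := by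
  intro N
  induction N using Nat.strong_induction_on with
  | _ N ih =>
  intro f hN hf
  classical
  by_cases hA : ∃ i : Fin n, (i : ℕ) < (f i : ℕ)
  · -- some point moves up: peel off a raising generator
    set s : Finset (Fin n) := Finset.univ.filter (fun i => (i : ℕ) < (f i : ℕ)) with hs
    have hsne : s.Nonempty := by
      obtain ⟨i, hi⟩ := hA
      exact ⟨i, by simp only [hs, Finset.mem_filter, Finset.mem_univ, true_and]; exact hi⟩
    set i₀ := s.min' hsne with hi₀def
    have hi₀ : (i₀ : ℕ) < (f i₀ : ℕ) := by
      have := s.min'_mem hsne; simp only [hs, Finset.mem_filter] at this; exact this.2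
    have hmin : ∀ x : Fin n, (x : ℕ) < (f x : ℕ) → i₀ ≤ x := fun x hx =>
      s.min'_le x (by simp only [hs, Finset.mem_filter, Finset.mem_univ, true_and]; exact hx)
    set q : Fin n := f i₀ with hqdef
    have hq1 : 1 ≤ (q : ℕ) := by omega
    obtain ⟨p, hp⟩ : ∃ p : Fin n, (p : ℕ) = (q : ℕ) - 1 :=
      ⟨⟨(q : ℕ) - 1, by have := q.isLt; omega⟩, rfl⟩
    have hlow : ∀ x : Fin n, (x : ℕ) < (i₀ : ℕ) → (f x : ℕ) ≤ (x : ℕ) := by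
      intro x hx
      by_contra hc
      have := hmin x (by omega)
      rw [Fin.le_def] at this; omega
    have hnp : ∀ x : Fin n, (f x : ℕ) ≠ (q : ℕ) - 1 := by
      intro x
      rcases lt_or_ge (x : ℕ) (i₀ : ℕ) with h | h
      · have := hlow x h; omega
      · have hqf : q ≤ f x := by rw [hqdef]; exact hf (Fin.le_def.mpr h)
        rw [Fin.le_def] at hqf; omega
    set f' : Function.End (Fin n) :=
      fun x => if f x = q ∧ (x : ℕ) < (q : ℕ) then p else f x with hf'def
    have hf' : Monotone f' := by
      intro x y hxy
      have hxy' : (x : ℕ) ≤ (y : ℕ) := hxy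
      simp only [hf'def]
      split_ifs with h1 h2 h2
      · exact le_refl _
      · have hq_le : q ≤ f y := by rw [← h1.1]; exact hf hxy
        rw [Fin.le_def] at hq_le ⊢; omega
      · have hfx : f x ≤ q := by rw [← h2.1]; exact hf hxy
        have hxq : (x : ℕ) < (q : ℕ) := lt_of_le_of_lt hxy' h2.2
        have hne : f x ≠ q := fun hh => h1 ⟨hh, hxq⟩
        have hne' : (f x : ℕ) ≠ (q : ℕ) := fun hh => hne (Fin.ext hh)
        rw [Fin.le_def] at hfx ⊢; omega
      · exact hf hxy
    have hcomp : f = unitaryT p q * f' := by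
      funext x
      show f x = unitaryT p q (f' x)
      simp only [hf'def, unitaryT]
      by_cases hT : f x = q ∧ (x : ℕ) < (q : ℕ)
      · rw [if_pos hT, if_pos rfl, hT.1]
      · have hne : f x ≠ p := fun hh => hnp x (by rw [hh, hp])
        rw [if_neg hT, if_neg hne]
    have hlt : (∑ i : Fin n, Nat.dist (f' i : ℕ) (i : ℕ)) < N := by
      rw [← hN]
      apply Finset.sum_lt_sum
      · intro i _
        simp only [hf'def]
        split_ifs with hT
        · have h1 : (f i : ℕ) = (q : ℕ) := by rw [hT.1]
          have h2 := hT.2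
          simp only [Nat.dist]; omega
        · exact le_refl _
      · refine ⟨i₀, Finset.mem_univ _, ?_⟩
        have hfi : f' i₀ = p := by
          show (if f i₀ = q ∧ (i₀ : ℕ) < (q : ℕ) then p else f i₀) = p
          rw [if_pos ⟨hqdef.symm, hi₀⟩]
        have hq' : (f i₀ : ℕ) = (q : ℕ) := by rw [hqdef]
        rw [hfi]
        simp only [Nat.dist]; omega
    have hg : unitaryT p q ∈ genSet n := ⟨p, q, Or.inl (by omega), rfl⟩
    rw [hcomp]
    exact Submonoid.mul_mem _ (Submonoid.subset_closure hg) (ih _ hlt f' rfl hf')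
  · push_neg at hA
    by_cases hB : ∃ i : Fin n, (f i : ℕ) < (i : ℕ)
    · -- some point moves down: peel off a lowering generator
      set s : Finset (Fin n) := Finset.univ.filter (fun i => (f i : ℕ) < (i : ℕ)) with hs
      have hsne : s.Nonempty := by
        obtain ⟨i, hi⟩ := hB
        exact ⟨i, by simp only [hs, Finset.mem_filter, Finset.mem_univ, true_and]; exact hi⟩
      set i₀ := s.max' hsne with hi₀def
      have hi₀ : (f i₀ : ℕ) < (i₀ : ℕ) := by
        have := s.max'_mem hsne; simp only [hs, Finset.mem_filter] at this; exact this.2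
      have hmax : ∀ x : Fin n, (f x : ℕ) < (x : ℕ) → x ≤ i₀ := fun x hx =>
        s.le_max' x (by simp only [hs, Finset.mem_filter, Finset.mem_univ, true_and]; exact hx)
      set q : Fin n := f i₀ with hqdef
      have hqi : (q : ℕ) < (i₀ : ℕ) := hi₀
      obtain ⟨p, hp⟩ : ∃ p : Fin n, (p : ℕ) = (q : ℕ) + 1 :=
        ⟨⟨(q : ℕ) + 1, by have := i₀.isLt; omega⟩, rfl⟩
      have hfix : ∀ x : Fin n, (i₀ : ℕ) < (x : ℕ) → (f x : ℕ) = (x : ℕ) := by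
        intro x hx
        have h1 := hA x
        by_contra hc
        have := hmax x (by omega)
        rw [Fin.le_def] at this; omega
      have hnp : ∀ x : Fin n, (f x : ℕ) ≠ (q : ℕ) + 1 := by
        intro x
        rcases le_or_gt (x : ℕ) (i₀ : ℕ) with h | h
        · have hqf : f x ≤ q := by rw [hqdef]; exact hf (Fin.le_def.mpr h)
          rw [Fin.le_def] at hqf; omega
        · have := hfix x h; omega
      set f' : Function.End (Fin n) :=
        fun x => if f x = q ∧ (q : ℕ) < (x : ℕ) then p else f x with hf'def
      have hf' : Monotone f' := by
        intro x y hxy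
        have hxy' : (x : ℕ) ≤ (y : ℕ) := hxy
        simp only [hf'def]
        split_ifs with h1 h2 h2
        · exact le_refl _
        · have hq_le : q ≤ f y := by rw [← h1.1]; exact hf hxy
          have hyq : (q : ℕ) < (y : ℕ) := lt_of_lt_of_le h1.2 hxy'
          have hne : f y ≠ q := fun hh => h2 ⟨hh, hyq⟩
          have hne' : (f y : ℕ) ≠ (q : ℕ) := fun hh => hne (Fin.ext hh)
          rw [Fin.le_def] at hq_le ⊢; omega
        · have hfx : f x ≤ q := by rw [← h2.1]; exact hf hxy
          rw [Fin.le_def] at hfx ⊢; omega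
        · exact hf hxy
      have hcomp : f = unitaryT p q * f' := by
        funext x
        show f x = unitaryT p q (f' x)
        simp only [hf'def, unitaryT]
        by_cases hT : f x = q ∧ (q : ℕ) < (x : ℕ)
        · rw [if_pos hT, if_pos rfl, hT.1]
        · have hne : f x ≠ p := fun hh => hnp x (by rw [hh, hp])
          rw [if_neg hT, if_neg hne]
      have hlt : (∑ i : Fin n, Nat.dist (f' i : ℕ) (i : ℕ)) < N := by
        rw [← hN]
        apply Finset.sum_lt_sum
        · intro i _
          simp only [hf'def]
          split_ifs with hT
          · have h1 : (f i : ℕ) = (q : ℕ) := by rw [hT.1]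
            have h2 := hT.2
            simp only [Nat.dist]; omega
          · exact le_refl _
        · refine ⟨i₀, Finset.mem_univ _, ?_⟩
          have hfi : f' i₀ = p := by
            show (if f i₀ = q ∧ (q : ℕ) < (i₀ : ℕ) then p else f i₀) = p
            rw [if_pos ⟨hqdef.symm, hqi⟩]
          have hq' : (f i₀ : ℕ) = (q : ℕ) := by rw [hqdef]
          rw [hfi]
          simp only [Nat.dist]; omega
      have hg : unitaryT p q ∈ genSet n := ⟨p, q, Or.inr (by omega), rfl⟩
      rw [hcomp]
      exact Submonoid.mul_mem _ (Submonoid.subset_closure hg) (ih _ hlt f' rfl hf')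
    · -- f is the identity
      push_neg at hB
      have hid : f = 1 := by
        funext i
        exact Fin.ext (le_antisymm (hA i) (hB i))
      rw [hid]
      exact Submonoid.one_mem _

/-- For every `n ≥ 1`, the submonoid of the monoid of transformations of
`Q_n = {0,…,n−1}` generated by the unitary transformations `(q→q+1)` for
`0 ≤ q ≤ n−2` and `(q→q−1)` for `1 ≤ q ≤ n−1`, together with the identity,
equals the set of all monotone transformations of `Q_n`. -/
theorem statement0 (n : ℕ) (hn : 1 ≤ n) :
    (Submonoid.closure
        {f : Function.End (Fin n) |
          ∃ p q : Fin n, ((q : ℕ) = (p : ℕ) + 1 ∨ (p : ℕ) = (q : ℕ) + 1) ∧ f = unitaryT p q} :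
        Set (Function.End (Fin n)))
      = {f : Function.End (Fin n) | Monotone f} := by
  apply Set.Subset.antisymm
  · intro f hf
    have hf' : f ∈ Submonoid.closure (genSet n) := hf
    show Monotone f
    refine Submonoid.closure_induction ?_ ?_ ?_ hf'
    · rintro g ⟨p, q, hpq, rfl⟩
      exact unitary_mono p q hpq
    · exact monotone_id
    · intro a b _ _ ha hb
      exact ha.comp hb
  · intro f hf
    exact mem_closure_of_monotone _ f rfl hf
end

section
/- For every n ≥ 2, the number of partially monotonic transformations of Q_n = {0,…,n−1} equals e(n) = Σ_{k=0}^{n−1} C(n−1, k)·C(n+k−2, k), where C denotes the binomial coefficient. Here a transformation t of Q_n is partially monotonic if t(n−1) = n−1 and for all p ≤ q with p, q < n−1, if t(p) < n−1 and t(q) < n−1 then t(p) ≤ t(q). -/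
section Aux

lemma smono_step {k : ℕ} (f : Fin k → ℕ) (hf : StrictMono f) :
    ∀ (d : ℕ) (i j : Fin k), (j : ℕ) = i + d → f i + d ≤ f j := by
  intro d
  induction d with
  | zero =>
    intro i j h
    have : i = j := Fin.ext (by omega)
    subst this; omega
  | succ d ih =>
    intro i j h
    have hjk : (j : ℕ) - 1 < k := by omega
    set j' : Fin k := ⟨(j : ℕ) - 1, hjk⟩ with hj'
    have h1 : f i + d ≤ f j' := ih i j' (by simp [hj']; omega)
    have h2 : f j' < f j := hf (by simp [Fin.lt_def, hj']; omega)
    omega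

/-- strict mono maps `Fin k ↪o Fin N` biject with `k`-subsets of `Fin N`. -/
noncomputable def embFinsetEquiv (k N : ℕ) :
    (Fin k ↪o Fin N) ≃ {s : Finset (Fin N) // s.card = k} where
  toFun f := ⟨Finset.univ.map f.toEmbedding, by simp⟩
  invFun s := s.1.orderEmbOfFin s.2
  left_inv f := by
    refine (Finset.orderEmbOfFin_unique' _ fun x => ?_).symm
    simp
  right_inv s := by
    refine Subtype.ext ?_
    ext x
    simp only [Finset.mem_map]
    constructor
    · rintro ⟨i, -, rfl⟩
      exact Finset.orderEmbOfFin_mem _ _ _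
    · intro hx
      have := Finset.range_orderEmbOfFin s.1 s.2
      have : x ∈ Set.range (s.1.orderEmbOfFin s.2) := by rw [this]; exact hx
      obtain ⟨i, hi⟩ := this
      exact ⟨i, Finset.mem_univ _, hi⟩

/-- monotone maps `Fin k → Fin (m'+1)` biject with strict mono maps into `Fin (m'+k)`. -/
noncomputable def monoEmbEquiv (k m' : ℕ) :
    {g : Fin k → Fin (m' + 1) // Monotone g} ≃ (Fin k ↪o Fin (m' + k)) where
  toFun g := OrderEmbedding.ofStrictMono
    (fun i => ⟨g.1 i + i, by have h1 := (g.1 i).isLt; have h2 := i.isLt; omega⟩)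
    (by
      intro i j hij
      have h1 : g.1 i ≤ g.1 j := g.2 hij.le
      simp only [Fin.lt_def]
      have := hij
      rw [Fin.lt_def] at this
      rw [Fin.le_def] at h1
      omega)
  invFun f := by
    have hsm : StrictMono (fun i : Fin k => (f i : ℕ)) := fun i j hij => f.strictMono hij
    have key : ∀ i : Fin k, (f i : ℕ) ≤ m' + i := by
      intro i
      have hk : (k : ℕ) - 1 < k := by have := i.isLt; omega
      have := smono_step _ hsm ((k - 1) - i) i ⟨k - 1, hk⟩ (by have := i.isLt; simp; omega)
      have hlt := (f ⟨k - 1, hk⟩).isLt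
      have := i.isLt
      simp at *
      omega
    refine ⟨fun i => ⟨(f i : ℕ) - i, by have := key i; omega⟩, ?_⟩
    intro i j hij
    have h1 := smono_step _ hsm ((j : ℕ) - i) i j (by rw [Fin.le_def] at hij; omega)
    rw [Fin.le_def] at hij ⊢
    simp only
    omega
  left_inv g := by
    refine Subtype.ext (funext fun i => ?_)
    simp
    exact Fin.ext (by show ((g.1 i : ℕ) + i) - i = g.1 i; omega)
  right_inv f := by
    have hsm : StrictMono (fun i : Fin k => (f i : ℕ)) := fun i j hij => f.strictMono hij
    refine RelEmbedding.ext fun i => ?_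
    have key : (i : ℕ) ≤ f i := by
      rcases Nat.eq_zero_or_pos k with hk | hk
      · exact absurd i.isLt (by omega)
      · have := smono_step _ hsm i ⟨0, hk⟩ i (by simp)
        omega
    refine Fin.ext ?_
    simp [OrderEmbedding.ofStrictMono]
    omega

lemma card_mono (m' k : ℕ) :
    Nat.card {g : Fin k → Fin (m' + 1) // Monotone g} = (m' + k).choose k := by
  rw [Nat.card_congr ((monoEmbEquiv k m').trans (embFinsetEquiv k (m' + k)))]
  rw [Nat.card_eq_fintype_card, Fintype.card_finset_len, Fintype.card_fin]

end Aux

def PartiallyMonotonic {n : ℕ} (f : Fin n → Fin n) : Prop :=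
  (∀ q : Fin n, (q : ℕ) = n - 1 → f q = q) ∧
  ∀ p q : Fin n, p ≤ q → (p : ℕ) < n - 1 → (q : ℕ) < n - 1 →
    (f p : ℕ) < n - 1 → (f q : ℕ) < n - 1 → f p ≤ f q

lemma MDom_ext {m : ℕ} {S S' : Finset (Fin m)} (h : S = S')
    (g : {g : Fin S.card → Fin m // Monotone g}) (g' : {g : Fin S'.card → Fin m // Monotone g})
    (hg : ∀ (i : Fin S.card) (j : Fin S'.card), (i : ℕ) = j → g.1 i = g'.1 j) :
    (⟨S, g⟩ : Σ T : Finset (Fin m), {g : Fin T.card → Fin m // Monotone g}) = ⟨S', g'⟩ := by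
  subst h
  exact Sigma.ext rfl (heq_of_eq (Subtype.ext (funext fun i => hg i i rfl)))

lemma orderEmbOfFin_congr {α : Type*} [LinearOrder α] {S S' : Finset α} (h : S = S')
    (i : Fin S.card) (j : Fin S'.card) (hij : (i : ℕ) = j) :
    S.orderEmbOfFin rfl i = S'.orderEmbOfFin rfl j := by
  subst h
  cases Fin.ext hij
  rfl

noncomputable def decodeFun {m' : ℕ} (S : Finset (Fin (m' + 1))) (g : Fin S.card → Fin (m' + 1)) :
    Fin (m' + 2) → Fin (m' + 2) := fun q =>
  if hq : q = Fin.last (m' + 1) then Fin.last (m' + 1)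
  else if hp : q.castPred hq ∈ S then
    (g ((S.orderIsoOfFin rfl).symm ⟨q.castPred hq, hp⟩)).castSucc
  else Fin.last (m' + 1)

lemma decodeFun_last {m' : ℕ} (S : Finset (Fin (m' + 1))) (g : Fin S.card → Fin (m' + 1)) :
    decodeFun S g (Fin.last (m' + 1)) = Fin.last (m' + 1) := by
  simp [decodeFun]

lemma decodeFun_mem {m' : ℕ} (S : Finset (Fin (m' + 1))) (g : Fin S.card → Fin (m' + 1))
    (p : Fin (m' + 1)) (hp : p ∈ S) :
    decodeFun S g p.castSucc = (g ((S.orderIsoOfFin rfl).symm ⟨p, hp⟩)).castSucc := by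
  have h1 : p.castSucc ≠ Fin.last (m' + 1) := (Fin.castSucc_lt_last p).ne
  simp [decodeFun, dif_neg h1, Fin.castPred_castSucc, hp]

lemma decodeFun_not_mem {m' : ℕ} (S : Finset (Fin (m' + 1))) (g : Fin S.card → Fin (m' + 1))
    (p : Fin (m' + 1)) (hp : p ∉ S) :
    decodeFun S g p.castSucc = Fin.last (m' + 1) := by
  have h1 : p.castSucc ≠ Fin.last (m' + 1) := (Fin.castSucc_lt_last p).ne
  simp [decodeFun, dif_neg h1, Fin.castPred_castSucc, hp]

lemma decodeFun_pm {m' : ℕ} (S : Finset (Fin (m' + 1))) (g : Fin S.card → Fin (m' + 1))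
    (hg : Monotone g) : PartiallyMonotonic (decodeFun S g) := by
  constructor
  · intro q hq
    have hq' : q = Fin.last (m' + 1) := Fin.ext (by simpa using hq)
    rw [hq', decodeFun_last]
  · intro p q hpq hp hq hfp hfq
    have hp1 : (p : ℕ) < m' + 1 := by omega
    have hq1 : (q : ℕ) < m' + 1 := by omega
    have hpne : p ≠ Fin.last (m' + 1) := by
      intro h; rw [h] at hp1; simp at hp1
    have hqne : q ≠ Fin.last (m' + 1) := by
      intro h; rw [h] at hq1; simp at hq1
    set p' := p.castPred hpne with hp'
    set q' := q.castPred hqne with hq'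
    have hpc : p = p'.castSucc := (Fin.castSucc_castPred p hpne).symm
    have hqc : q = q'.castSucc := (Fin.castSucc_castPred q hqne).symm
    by_cases hmp : p' ∈ S
    · by_cases hmq : q' ∈ S
      · rw [hpc, hqc, decodeFun_mem S g p' hmp, decodeFun_mem S g q' hmq]
        rw [Fin.castSucc_le_castSucc_iff]
        apply hg
        rw [← OrderIso.le_iff_le (S.orderIsoOfFin rfl)]
        simp only [OrderIso.apply_symm_apply]
        refine Subtype.mk_le_mk.mpr ?_
        simp only [Fin.le_def, Fin.coe_castPred]
        exact hpq
      · rw [hqc, decodeFun_not_mem S g q' hmq] at hfq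
        simp at hfq
    · rw [hpc, decodeFun_not_mem S g p' hmp] at hfp
      simp at hfp

noncomputable def pmEquiv (m' : ℕ) :
    {f : Fin (m' + 2) → Fin (m' + 2) // PartiallyMonotonic f} ≃
      Σ S : Finset (Fin (m' + 1)), {g : Fin S.card → Fin (m' + 1) // Monotone g} where
  toFun f :=
    ⟨Finset.univ.filter (fun p : Fin (m' + 1) => (f.1 p.castSucc : ℕ) < m' + 1),
     ⟨fun i => ⟨(f.1 ((((Finset.univ.filter
          (fun p : Fin (m' + 1) => (f.1 p.castSucc : ℕ) < m' + 1))).orderEmbOfFin rfl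
          i).castSucc) : ℕ),
        by
          have hmem := Finset.orderEmbOfFin_mem (Finset.univ.filter
            (fun p : Fin (m' + 1) => (f.1 p.castSucc : ℕ) < m' + 1)) rfl i
          rw [Finset.mem_filter] at hmem
          exact hmem.2⟩,
      by
        intro i j hij
        dsimp only
        rw [Fin.mk_le_mk]
        have hmemi := Finset.orderEmbOfFin_mem (Finset.univ.filter
          (fun p : Fin (m' + 1) => (f.1 p.castSucc : ℕ) < m' + 1)) rfl i
        have hmemj := Finset.orderEmbOfFin_mem (Finset.univ.filter
          (fun p : Fin (m' + 1) => (f.1 p.castSucc : ℕ) < m' + 1)) rfl j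
        rw [Finset.mem_filter] at hmemi hmemj
        have hle := Fin.castSucc_le_castSucc_iff.mpr
          (((Finset.univ.filter (fun p : Fin (m' + 1) =>
            (f.1 p.castSucc : ℕ) < m' + 1)).orderEmbOfFin rfl).monotone hij)
        have := f.2.2 _ _ hle (by simp; exact Fin.is_le _) (by simp; exact Fin.is_le _)
          (by simpa using hmemi.2) (by simpa using hmemj.2)
        exact this⟩⟩
  invFun Sg := ⟨decodeFun Sg.1 Sg.2.1, decodeFun_pm _ _ Sg.2.2⟩
  left_inv := by
    rintro ⟨f, hf⟩
    refine Subtype.ext (funext fun q => ?_)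
    simp only
    set S := Finset.univ.filter
      (fun p : Fin (m' + 1) => (f p.castSucc : ℕ) < m' + 1) with hS
    by_cases hqne : q = Fin.last (m' + 1)
    · rw [hqne, decodeFun_last]
      exact (hf.1 _ (by simp)).symm
    · set p := q.castPred hqne with hp
      have hqc : q = p.castSucc := (Fin.castSucc_castPred q hqne).symm
      by_cases hmp : p ∈ S
      · rw [hqc, decodeFun_mem S _ p hmp]
        have hemb : S.orderEmbOfFin rfl ((S.orderIsoOfFin rfl).symm ⟨p, hmp⟩) = p := by
          rw [← Finset.coe_orderIsoOfFin_apply, OrderIso.apply_symm_apply]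
        refine Fin.ext ?_
        simp only [Fin.coe_castSucc, hemb]
        exact congrArg (fun x => ((f x.castSucc : Fin (m' + 2)) : ℕ)) hemb
      · rw [hqc, decodeFun_not_mem S _ p hmp]
        rw [hS, Finset.mem_filter] at hmp
        push_neg at hmp
        have h2 := hmp (Finset.mem_univ _)
        have hlt := (f p.castSucc).isLt
        exact (Fin.ext (by simp; omega)).symm
  right_inv := by
    rintro ⟨S, g, hg⟩
    have hSeq : Finset.univ.filter
        (fun p : Fin (m' + 1) => ((decodeFun S g) p.castSucc : ℕ) < m' + 1) = S := by
      ext p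
      simp only [Finset.mem_filter, Finset.mem_univ, true_and]
      constructor
      · intro h
        by_contra hp
        rw [decodeFun_not_mem S g p hp] at h
        simp at h
      · intro hp
        rw [decodeFun_mem S g p hp]
        simp
        exact Fin.is_le _
    refine MDom_ext hSeq _ _ ?_
    intro i j hij
    dsimp only
    set p : Fin (m' + 1) := (Finset.univ.filter
      (fun p : Fin (m' + 1) => ((decodeFun S g) p.castSucc : ℕ) < m' + 1)).orderEmbOfFin rfl i
      with hpdef
    have hpj : p = S.orderEmbOfFin rfl j := orderEmbOfFin_congr hSeq i j hij
    have hpS : p ∈ S := by rw [hpj]; exact Finset.orderEmbOfFin_mem _ _ _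
    have hsymm : (S.orderIsoOfFin rfl).symm ⟨p, hpS⟩ = j := by
      rw [OrderIso.symm_apply_eq]
      refine Subtype.ext ?_
      rw [Finset.coe_orderIsoOfFin_apply]
      exact hpj
    refine Fin.ext ?_
    show ((decodeFun S g) p.castSucc : ℕ) = (g j : ℕ)
    rw [decodeFun_mem S g p hpS, hsymm]
    simp

/-- For every `n ≥ 2`, the number of partially monotonic transformations of
`Q_n = {0,…,n−1}` equals `e(n) = Σ_{k=0}^{n−1} C(n−1, k)·C(n+k−2, k)`. -/
theorem statement4 (n : ℕ) (hn : 2 ≤ n) :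
    Set.ncard {f : Fin n → Fin n | PartiallyMonotonic f} =
      ∑ k ∈ Finset.range n, Nat.choose (n - 1) k * Nat.choose (n + k - 2) k := by
  obtain ⟨m', rfl⟩ : ∃ m', n = m' + 2 := ⟨n - 2, by omega⟩
  have h1 : {f : Fin (m' + 2) → Fin (m' + 2) | PartiallyMonotonic f}.ncard
      = Nat.card {f : Fin (m' + 2) → Fin (m' + 2) // PartiallyMonotonic f} :=
    (Nat.card_coe_set_eq _).symm
  rw [h1, Nat.card_congr (pmEquiv m')]
  haveI : ∀ (S : Finset (Fin (m' + 1))), Fintype {g : Fin S.card → Fin (m' + 1) // Monotone g} :=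
    fun S => Fintype.ofFinite _
  rw [Nat.card_eq_fintype_card, Fintype.card_sigma]
  have h2 : ∀ S : Finset (Fin (m' + 1)),
      Fintype.card {g : Fin S.card → Fin (m' + 1) // Monotone g}
        = (m' + S.card).choose S.card :=
    fun S => by rw [← Nat.card_eq_fintype_card, card_mono]
  simp only [h2]
  rw [← Finset.powerset_univ,
    Finset.sum_powerset_apply_card (fun k => (m' + k).choose k) (x := Finset.univ)]
  rw [Finset.card_univ, Fintype.card_fin]
  refine Finset.sum_congr rfl fun k hk => ?_
  rw [smul_eq_mul, show m' + 2 - 1 = m' + 1 from by omega,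
    show m' + 2 + k - 2 = m' + k from by omega]
end

section
/- For every n ≥ 2, the submonoid of the monoid of transformations of Q_n = {0,…,n−1} generated by the unitary transformations (q→q+1) and (q+1→q) for 0 ≤ q ≤ n−3, the unitary transformations (q→n−1) for 0 ≤ q ≤ n−2, and the identity, is equal to the set of all partially monotonic transformations of Q_n, i.e., all t with t(n−1) = n−1 such that for all p ≤ q with p, q < n−1, if t(p) < n−1 and t(q) < n−1 then t(p) ≤ t(q). -/
theorem total_in_closure {n : ℕ} (hn : 2 ≤ n) (C : Submonoid (Function.End (Fin n)))
    (hC : ∀ a b : Fin n, (b : ℕ) = (a : ℕ) + 1 → (b : ℕ) < n - 1 →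
      unitaryT a b ∈ C ∧ unitaryT b a ∈ C)
    (g : Fin n → Fin n) (hmono : Monotone g)
    (hfix : ∀ i : Fin n, (i : ℕ) = n - 1 → g i = i)
    (hsmall : ∀ i : Fin n, (i : ℕ) < n - 1 → (g i : ℕ) < n - 1) :
    g ∈ C := by
  suffices H : ∀ N : ℕ, ∀ g : Fin n → Fin n,
      (∑ i : Fin n, (((g i : ℕ) - (i : ℕ)) + ((i : ℕ) - (g i : ℕ)))) = N → Monotone g →
      (∀ i : Fin n, (i : ℕ) = n - 1 → g i = i) →
      (∀ i : Fin n, (i : ℕ) < n - 1 → (g i : ℕ) < n - 1) → g ∈ C by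
    exact H _ g rfl hmono hfix hsmall
  intro N
  induction N using Nat.strong_induction_on with
  | _ N ih =>
  intro g hMg hmono hfix hsmall
  by_cases h0 : ∀ i : Fin n, g i = i
  · have : g = (1 : Function.End (Fin n)) := funext h0
    rw [this]; exact C.one_mem
  push_neg at h0
  by_cases hdec : ∃ i : Fin n, (g i : ℕ) < (i : ℕ)
  · -- decreasing case: peel at the largest point moved down
    set s : Finset (Fin n) := Finset.univ.filter (fun i : Fin n => (g i : ℕ) < (i : ℕ)) with hs
    have hsne : s.Nonempty := by
      obtain ⟨i, hi⟩ := hdec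
      exact ⟨i, by rw [hs]; exact Finset.mem_filter.mpr ⟨Finset.mem_univ _, hi⟩⟩
    set i0 : Fin n := s.max' hsne with hi0def
    have hi0 : (g i0 : ℕ) < (i0 : ℕ) := by
      have h : i0 ∈ s := s.max'_mem hsne
      rw [hs] at h
      exact (Finset.mem_filter.mp h).2
    have hmax : ∀ j : Fin n, (g j : ℕ) < (j : ℕ) → j ≤ i0 := by
      intro j hj
      exact s.le_max' j (by rw [hs]; exact Finset.mem_filter.mpr ⟨Finset.mem_univ _, hj⟩)
    have hup : ∀ j : Fin n, (i0 : ℕ) < (j : ℕ) → (j : ℕ) ≤ (g j : ℕ) := by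
      intro j hj
      by_contra h
      have := hmax j (by omega)
      rw [Fin.le_def] at this; omega
    have hi0lt : (i0 : ℕ) < n - 1 := by
      have h1 : (i0 : ℕ) < n := i0.isLt
      rcases Nat.lt_or_ge (i0 : ℕ) (n - 1) with h | h
      · exact h
      · exfalso
        have : (i0 : ℕ) = n - 1 := by omega
        have := hfix i0 this
        omega
    set v : ℕ := (g i0 : ℕ) with hv
    have hvb : v + 1 < n := by omega
    set a : Fin n := ⟨v, by omega⟩ with ha
    set b : Fin n := ⟨v + 1, hvb⟩ with hb
    set g' : Fin n → Fin n := fun j => if j = i0 then b else g j with hg'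
    have hgj : ∀ j : Fin n, j ≠ i0 → (g j : ℕ) ≠ v + 1 := by
      intro j hj
      rcases Nat.lt_trichotomy (j : ℕ) (i0 : ℕ) with h | h | h
      · have : g j ≤ g i0 := hmono (by rw [Fin.le_def]; omega)
        rw [Fin.le_def] at this; omega
      · exact absurd (Fin.ext h) hj
      · have := hup j h; omega
    have hfact : g = (unitaryT b a : Function.End (Fin n)) * (show Function.End (Fin n) from g') := by
      funext j
      show g j = unitaryT b a (g' j)
      by_cases hj : j = i0
      · subst hj
        simp only [hg', if_pos rfl, unitaryT, if_pos rfl]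
        exact Fin.ext (by simp [ha]; rfl)
      · simp only [hg', if_neg hj, unitaryT]
        have : g j ≠ b := by
          intro h
          exact hgj j hj (by rw [h])
        rw [if_neg this]
    have hg'mono : Monotone g' := by
      intro x y hxy
      by_cases hx : x = i0 <;> by_cases hy : y = i0 <;>
        simp only [hg', hx, hy, if_pos, if_neg, if_true]
      · exact le_refl _
      · rw [Fin.le_def]
        have hxy' : (i0 : ℕ) ≤ (y : ℕ) := by rw [← hx]; exact hxy
        have : (i0 : ℕ) < (y : ℕ) := by
          rcases Nat.eq_or_lt_of_le hxy' with h | h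
          · exact absurd (Fin.ext h.symm) hy
          · exact h
        have := hup y this
        simp [hb]; omega
      · rw [Fin.le_def]
        have : g x ≤ g i0 := hmono (by rw [hy] at hxy; exact hxy)
        rw [Fin.le_def] at this
        simp [hb]; omega
      · exact hmono hxy
    have hg'fix : ∀ i : Fin n, (i : ℕ) = n - 1 → g' i = i := by
      intro i hi
      have : i ≠ i0 := by intro h; rw [h] at hi; omega
      simp only [hg', if_neg this]
      exact hfix i hi
    have hg'small : ∀ i : Fin n, (i : ℕ) < n - 1 → (g' i : ℕ) < n - 1 := by
      intro i hi
      by_cases h : i = i0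
      · simp only [hg', if_pos h, hb]; omega
      · simp only [hg', if_neg h]; exact hsmall i hi
    have hMlt : (∑ i : Fin n, (((g' i : ℕ) - (i : ℕ)) + ((i : ℕ) - (g' i : ℕ)))) < N := by
      rw [← hMg]
      apply Finset.sum_lt_sum
      · intro i _
        by_cases h : i = i0
        · subst h; simp only [hg', if_pos rfl, hb]; omega
        · simp only [hg', if_neg h]; omega
      · refine ⟨i0, Finset.mem_univ _, ?_⟩
        simp only [hg', if_pos rfl, hb]; omega
    rw [hfact]
    exact C.mul_mem ((hC a b (by simp [ha, hb]) (by simp [hb]; omega)).2)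
      (ih _ hMlt g' rfl hg'mono hg'fix hg'small)
  · -- increasing case
    push_neg at hdec
    set s : Finset (Fin n) := Finset.univ.filter (fun i : Fin n => (i : ℕ) < (g i : ℕ)) with hs
    have hsne : s.Nonempty := by
      obtain ⟨i, hi⟩ := h0
      refine ⟨i, ?_⟩
      have h1 := hdec i
      have h2 : (g i : ℕ) ≠ (i : ℕ) := fun h => hi (Fin.ext h)
      rw [hs]
      exact Finset.mem_filter.mpr ⟨Finset.mem_univ _, by omega⟩
    set i0 : Fin n := s.min' hsne with hi0def
    have hi0 : (i0 : ℕ) < (g i0 : ℕ) := by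
      have h : i0 ∈ s := s.min'_mem hsne
      rw [hs] at h
      exact (Finset.mem_filter.mp h).2
    have hmin : ∀ j : Fin n, (j : ℕ) < (g j : ℕ) → i0 ≤ j := by
      intro j hj
      exact s.min'_le j (by rw [hs]; exact Finset.mem_filter.mpr ⟨Finset.mem_univ _, hj⟩)
    have hdown : ∀ j : Fin n, (j : ℕ) < (i0 : ℕ) → (g j : ℕ) = (j : ℕ) := by
      intro j hj
      have h1 := hdec j
      by_contra h
      have := hmin j (by omega)
      rw [Fin.le_def] at this; omega
    have hi0lt : (i0 : ℕ) < n - 1 := by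
      have h1 : (i0 : ℕ) < n := i0.isLt
      rcases Nat.lt_or_ge (i0 : ℕ) (n - 1) with h | h
      · exact h
      · exfalso
        have : (i0 : ℕ) = n - 1 := by omega
        have := hfix i0 this
        omega
    set v : ℕ := (g i0 : ℕ) with hv
    have hvlt : v < n - 1 := hsmall i0 hi0lt
    have hv1 : 1 ≤ v := by omega
    set a : Fin n := ⟨v - 1, by omega⟩ with ha
    set b : Fin n := ⟨v, by omega⟩ with hb
    set g' : Fin n → Fin n := fun j => if j = i0 then a else g j with hg'
    have hgj : ∀ j : Fin n, j ≠ i0 → (g j : ℕ) ≠ v - 1 := by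
      intro j hj
      rcases Nat.lt_trichotomy (j : ℕ) (i0 : ℕ) with h | h | h
      · have := hdown j h; omega
      · exact absurd (Fin.ext h) hj
      · have : g i0 ≤ g j := hmono (by rw [Fin.le_def]; omega)
        rw [Fin.le_def] at this; omega
    have hfact : g = (unitaryT a b : Function.End (Fin n)) * (show Function.End (Fin n) from g') := by
      funext j
      show g j = unitaryT a b (g' j)
      by_cases hj : j = i0
      · subst hj
        simp only [hg', if_pos rfl, unitaryT, if_pos rfl]
        exact Fin.ext (by simp [hb]; rfl)
      · simp only [hg', if_neg hj, unitaryT]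
        have : g j ≠ a := by
          intro h
          exact hgj j hj (by rw [h])
        rw [if_neg this]
    have hg'mono : Monotone g' := by
      intro x y hxy
      by_cases hx : x = i0 <;> by_cases hy : y = i0 <;>
        simp only [hg', hx, hy, if_pos, if_neg, if_true]
      · exact le_refl _
      · rw [Fin.le_def]
        have hxy' : (i0 : ℕ) ≤ (y : ℕ) := by rw [← hx]; exact hxy
        have : g i0 ≤ g y := hmono (by rw [Fin.le_def]; omega)
        rw [Fin.le_def] at this
        simp [ha]; omega
      · rw [Fin.le_def]
        have hxy' : (x : ℕ) ≤ (i0 : ℕ) := by rw [← hy]; exact hxy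
        have hlt : (x : ℕ) < (i0 : ℕ) := by
          rcases Nat.eq_or_lt_of_le hxy' with h | h
          · exact absurd (Fin.ext h) hx
          · exact h
        have := hdown x hlt
        simp [ha]; omega
      · exact hmono hxy
    have hg'fix : ∀ i : Fin n, (i : ℕ) = n - 1 → g' i = i := by
      intro i hi
      have : i ≠ i0 := by intro h; rw [h] at hi; omega
      simp only [hg', if_neg this]
      exact hfix i hi
    have hg'small : ∀ i : Fin n, (i : ℕ) < n - 1 → (g' i : ℕ) < n - 1 := by
      intro i hi
      by_cases h : i = i0
      · simp only [hg', if_pos h, ha]; omega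
      · simp only [hg', if_neg h]; exact hsmall i hi
    have hMlt : (∑ i : Fin n, (((g' i : ℕ) - (i : ℕ)) + ((i : ℕ) - (g' i : ℕ)))) < N := by
      rw [← hMg]
      apply Finset.sum_lt_sum
      · intro i _
        by_cases h : i = i0
        · subst h; simp only [hg', if_pos rfl, ha]; omega
        · simp only [hg', if_neg h]; omega
      · refine ⟨i0, Finset.mem_univ _, ?_⟩
        simp only [hg', if_pos rfl, ha]; omega
    rw [hfact]
    exact C.mul_mem ((hC a b (by simp [ha, hb]; omega) (by simp [hb]; omega)).1)
      (ih _ hMlt g' rfl hg'mono hg'fix hg'small)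

theorem delete_in_closure {n : ℕ} (hn : 2 ≤ n) (C : Submonoid (Function.End (Fin n)))
    (hC : ∀ p r : Fin n, (p : ℕ) < n - 1 → (r : ℕ) = n - 1 → unitaryT p r ∈ C)
    (S : Finset (Fin n)) (hS : ∀ p ∈ S, (p : ℕ) < n - 1) :
    (fun p => if p ∈ S then (⟨n - 1, by omega⟩ : Fin n) else p) ∈ C := by
  induction S using Finset.induction_on with
  | empty =>
      have : (fun p : Fin n => if p ∈ (∅ : Finset (Fin n)) then (⟨n - 1, by omega⟩ : Fin n) else p)
          = (1 : Function.End (Fin n)) := by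
        funext p; simp [Function.End]; rfl
      rw [this]; exact C.one_mem
  | @insert a S ha ih =>
      have haS : (a : ℕ) < n - 1 := hS a (Finset.mem_insert_self a S)
      have hS' : ∀ p ∈ S, (p : ℕ) < n - 1 := fun p hp => hS p (Finset.mem_insert_of_mem hp)
      have key : ((fun p : Fin n => if p ∈ insert a S then (⟨n - 1, by omega⟩ : Fin n) else p) :
            Function.End (Fin n))
          = (unitaryT a (⟨n - 1, by omega⟩ : Fin n)) *
            (show Function.End (Fin n) from
              fun p : Fin n => if p ∈ S then (⟨n - 1, by omega⟩ : Fin n) else p) := by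
        funext p
        show _ = unitaryT a ⟨n - 1, by omega⟩ (if p ∈ S then (⟨n - 1, by omega⟩ : Fin n) else p)
        by_cases hp : p ∈ S
        · have : p ∈ insert a S := Finset.mem_insert_of_mem hp
          simp only [hp, this, if_true]
          have : (⟨n - 1, by omega⟩ : Fin n) ≠ a := by
            intro h; rw [← h] at haS; simp at haS
          simp [unitaryT, this]
        · by_cases hpa : p = a
          · subst hpa
            simp only [hp, if_false, Finset.mem_insert_self, if_true]
            simp [unitaryT]
          · have : p ∉ insert a S := by simp [hpa, hp]
            simp only [hp, this, if_false]
            simp [unitaryT, hpa]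
      rw [key]
      exact C.mul_mem (hC a ⟨n - 1, by omega⟩ haS rfl) (ih hS')

/-- For every `n ≥ 2`, the submonoid of transformations of `Q_n = {0,…,n−1}`
generated by the unitary transformations `(q→q+1)` and `(q+1→q)` for `0 ≤ q ≤ n−3`,
the unitary transformations `(q→n−1)` for `0 ≤ q ≤ n−2`, and the identity, equals
the set of all partially monotonic transformations of `Q_n`. -/
theorem statement5 (n : ℕ) (hn : 2 ≤ n) :
    (Submonoid.closure
        ({f : Function.End (Fin n) |
            ∃ p q : Fin n, (q : ℕ) = (p : ℕ) + 1 ∧ (q : ℕ) < n - 1 ∧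
              (f = unitaryT p q ∨ f = unitaryT q p)} ∪
         {f : Function.End (Fin n) |
            ∃ p r : Fin n, (p : ℕ) < n - 1 ∧ (r : ℕ) = n - 1 ∧ f = unitaryT p r}) :
        Set (Function.End (Fin n)))
      = {f : Function.End (Fin n) | PartiallyMonotonic f} := by
  set G : Set (Function.End (Fin n)) :=
      ({f : Function.End (Fin n) |
          ∃ p q : Fin n, (q : ℕ) = (p : ℕ) + 1 ∧ (q : ℕ) < n - 1 ∧
            (f = unitaryT p q ∨ f = unitaryT q p)} ∪
       {f : Function.End (Fin n) |
          ∃ p r : Fin n, (p : ℕ) < n - 1 ∧ (r : ℕ) = n - 1 ∧ f = unitaryT p r}) with hG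
  set C : Submonoid (Function.End (Fin n)) := Submonoid.closure G with hCdef
  apply Set.Subset.antisymm
  · -- closure ⊆ PM
    intro f hf
    have hfC : f ∈ C := hf
    -- the PM submonoid
    have key : ∀ f ∈ C, PartiallyMonotonic f := by
      intro f hf
      refine Submonoid.closure_induction ?_ ?_ ?_ hf
      · -- generators are PM
        rintro u (⟨p, q, hq1, hq2, hu | hu⟩ | ⟨p, r, hp, hr, hu⟩)
        · -- unitaryT p q, q = p+1 < n-1 : monotone total
          subst hu
          constructor
          · intro x hx
            have : x ≠ p := by intro h; rw [h] at hx; omega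
            simp [unitaryT, this]
          · intro x y hxy _ _ _ _
            rw [Fin.le_def]
            simp only [unitaryT]
            rw [Fin.le_def] at hxy
            by_cases hx : x = p <;> by_cases hy : y = p <;> simp [hx, hy]
            · have : (y : ℕ) ≠ (p : ℕ) := fun h => hy (Fin.ext h)
              rw [hx] at hxy; omega
            · have : (x : ℕ) ≠ (p : ℕ) := fun h => hx (Fin.ext h)
              rw [hy] at hxy; omega
            · omega
        · -- unitaryT q p with q = p+1
          subst hu
          constructor
          · intro x hx
            have : x ≠ q := by intro h; rw [h] at hx; omega
            simp [unitaryT, this]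
          · intro x y hxy _ _ _ _
            rw [Fin.le_def]
            simp only [unitaryT]
            rw [Fin.le_def] at hxy
            by_cases hx : x = q <;> by_cases hy : y = q <;> simp [hx, hy]
            · have : (y : ℕ) ≠ (q : ℕ) := fun h => hy (Fin.ext h)
              rw [hx] at hxy; omega
            · have : (x : ℕ) ≠ (q : ℕ) := fun h => hx (Fin.ext h)
              rw [hy] at hxy; omega
            · omega
        · -- deletion
          subst hu
          constructor
          · intro x hx
            have : x ≠ p := by intro h; rw [h] at hx; omega
            simp [unitaryT, this]
          · intro x y hxy hx1 hy1 hx2 hy2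
            simp only [unitaryT] at hx2 hy2 ⊢
            by_cases hx : x = p
            · rw [if_pos hx] at hx2; omega
            · by_cases hy : y = p
              · rw [if_pos hy] at hy2; omega
              · rw [if_neg hx, if_neg hy]; exact hxy
      · -- identity is PM
        constructor
        · intro x _; rfl
        · intro x y hxy _ _ _ _; exact hxy
      · -- composition of PM is PM
        intro u v _ _ hu hv
        constructor
        · intro x hx
          show u (v x) = x
          rw [hv.1 x hx, hu.1 x hx]
        · intro x y hxy hx1 hy1 hx2 hy2
          show (u (v x)) ≤ (u (v y))
          have hvx : (v x : ℕ) < n - 1 := by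
            by_contra h
            have hve : (v x : ℕ) = n - 1 := by have := (v x).isLt; omega
            have he : u (v x) = v x := hu.1 (v x) hve
            have hx2' : (u (v x) : ℕ) < n - 1 := hx2
            rw [he] at hx2'
            omega
          have hvy : (v y : ℕ) < n - 1 := by
            by_contra h
            have hve : (v y : ℕ) = n - 1 := by have := (v y).isLt; omega
            have he : u (v y) = v y := hu.1 (v y) hve
            have hy2' : (u (v y) : ℕ) < n - 1 := hy2
            rw [he] at hy2'
            omega
          have h1 : v x ≤ v y := hv.2 x y hxy hx1 hy1 hvx hvy
          exact hu.2 (v x) (v y) h1 hvx hvy hx2 hy2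
    exact key f hfC
  · -- PM ⊆ closure
    intro f hf
    obtain ⟨hfix, hmono⟩ := hf
    set mt : Fin n := ⟨n - 1, by omega⟩ with hmt
    -- the deletion set
    set S : Finset (Fin n) :=
      Finset.univ.filter (fun p => (p : ℕ) < n - 1 ∧ ¬ ((f p : ℕ) < n - 1)) with hS
    set d : Fin n → Fin n := fun p => if p ∈ S then mt else p with hd
    -- the total monotone extension
    set g : Fin n → Fin n := fun p =>
      if (p : ℕ) = n - 1 then p
      else ⟨(Finset.univ.filter (fun q : Fin n => (f q : ℕ) < n - 1 ∧ q ≤ p)).sup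
              (fun q => (f q : ℕ)), by
        have : (Finset.univ.filter (fun q : Fin n => (f q : ℕ) < n - 1 ∧ q ≤ p)).sup
            (fun q => (f q : ℕ)) < n - 1 := by
          apply Finset.sup_lt_iff (by simp only [Nat.bot_eq_zero]; omega : (⊥ : ℕ) < n - 1) |>.mpr
          intro q hq
          exact (Finset.mem_filter.mp hq).2.1
        omega⟩ with hg
    have hgsmall : ∀ p : Fin n, (p : ℕ) < n - 1 → (g p : ℕ) < n - 1 := by
      intro p hp
      simp only [hg, if_neg (by omega : ¬ (p : ℕ) = n - 1)]
      apply Finset.sup_lt_iff (by simp only [Nat.bot_eq_zero]; omega : (⊥ : ℕ) < n - 1) |>.mpr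
      intro q hq
      exact (Finset.mem_filter.mp hq).2.1
    have hgfix : ∀ p : Fin n, (p : ℕ) = n - 1 → g p = p := by
      intro p hp
      simp only [hg, if_pos hp]
    have hgmono : Monotone g := by
      intro x y hxy
      by_cases hy1 : (y : ℕ) = n - 1
      · rw [hgfix y hy1, Fin.le_def]
        have := (g x).isLt
        omega
      · have hx1 : ¬ (x : ℕ) = n - 1 := by
          rw [Fin.le_def] at hxy
          have := y.isLt
          omega
        simp only [hg, if_neg hx1, if_neg hy1]
        rw [Fin.le_def]
        simp only
        apply Finset.sup_mono
        intro q hq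
        rw [Finset.mem_filter] at hq ⊢
        exact ⟨hq.1, hq.2.1, le_trans hq.2.2 hxy⟩
    have hfact : f = (show Function.End (Fin n) from g) * (show Function.End (Fin n) from d) := by
      funext p
      show f p = g (d p)
      by_cases hp1 : (p : ℕ) = n - 1
      · have hpS : p ∉ S := by
          rw [hS, Finset.mem_filter]
          push_neg
          intro _ h
          omega
        simp only [hd, if_neg hpS]
        rw [hgfix p hp1, hfix p hp1]
      · by_cases hp2 : (f p : ℕ) < n - 1
        · have hpS : p ∉ S := by
            rw [hS, Finset.mem_filter]
            push_neg
            intro _ h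
            exact hp2
          simp only [hd, if_neg hpS, hg, if_neg hp1]
          apply Fin.ext
          simp only
          apply le_antisymm
          · apply Finset.le_sup (f := fun q : Fin n => (f q : ℕ))
            exact Finset.mem_filter.mpr ⟨Finset.mem_univ _, hp2, le_refl _⟩
          · apply Finset.sup_le
            intro q hq
            rw [Finset.mem_filter] at hq
            obtain ⟨_, hq1, hq2⟩ := hq
            have hqn : (q : ℕ) < n - 1 := by
              by_contra h
              have hqe : (q : ℕ) = n - 1 := by have := q.isLt; omega
              rw [hfix q hqe] at hq1
              omega
            have := hmono q p hq2 hqn (by omega) hq1 hp2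
            rw [Fin.le_def] at this
            exact this
        · have hpS : p ∈ S := by
            rw [hS, Finset.mem_filter]
            exact ⟨Finset.mem_univ _, by omega, hp2⟩
          simp only [hd, if_pos hpS]
          have : g mt = mt := hgfix mt (by simp [hmt])
          rw [this]
          apply Fin.ext
          have := (f p).isLt
          simp only [hmt]
          omega
    rw [hfact]
    apply C.mul_mem
    · apply total_in_closure hn C _ g hgmono hgfix hgsmall
      intro a b hab hbn
      constructor
      · apply Submonoid.subset_closure
        rw [hG]
        left
        exact ⟨a, b, hab, hbn, Or.inl rfl⟩
      · apply Submonoid.subset_closure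
        rw [hG]
        left
        exact ⟨a, b, hab, hbn, Or.inr rfl⟩
    · apply delete_in_closure hn C _ S
      · intro p hp
        rw [hS, Finset.mem_filter] at hp
        exact hp.2.1
      · intro p r hp hr
        apply Submonoid.subset_closure
        rw [hG]
        right
        exact ⟨p, r, hp, hr, rfl⟩
end

section
/- For every n ≥ 2, the submonoid of the monoid of transformations of Q_n = {0,…,n−1} generated by the unitary transformations (q→q+1) and (q+1→q) for 0 ≤ q ≤ n−3, the unitary transformations (q→n−1) for 0 ≤ q ≤ n−2, the constant transformation sending every element to 0, and the identity, equals the set of nearly monotonic transformations, namely the union of the set of all partially monotonic transformations of Q_n with the set of all constant transformations of Q_n; moreover this set has cardinality e(n) + n − 1, where e(n) = Σ_{k=0}^{n−1} C(n−1, k)·C(n+k−2, k). -/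
/-- The set of nearly monotonic transformations: partially monotonic ones together
with all constant transformations. -/
def NearlyMonotonicSet (n : ℕ) : Set (Function.End (Fin n)) :=
  {f | PartiallyMonotonic f} ∪ {f | ∃ c : Fin n, f = fun _ => c}

namespace S6

attribute [local instance 0] Classical.propDecidable

variable {n : ℕ}

/-- The generating set. -/
def Gen (n : ℕ) (h0 : 0 < n) : Set (Function.End (Fin n)) :=
  {f : Function.End (Fin n) |
      ∃ p q : Fin n, (q : ℕ) = (p : ℕ) + 1 ∧ (q : ℕ) < n - 1 ∧
        (f = unitaryT p q ∨ f = unitaryT q p)} ∪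
  {f : Function.End (Fin n) |
      ∃ p r : Fin n, (p : ℕ) < n - 1 ∧ (r : ℕ) = n - 1 ∧ f = unitaryT p r} ∪
  {fun _ => (⟨0, h0⟩ : Fin n)}

lemma mul_apply (f g : Function.End (Fin n)) (x : Fin n) : (f * g) x = f (g x) := rfl

lemma one_apply (x : Fin n) : (1 : Function.End (Fin n)) x = x := rfl

lemma pm_one : PartiallyMonotonic (1 : Function.End (Fin n)) :=
  ⟨fun _ _ => rfl, fun _ _ h _ _ _ _ => h⟩

lemma val_le_iff {a b : Fin n} : a ≤ b ↔ (a : ℕ) ≤ (b : ℕ) := Iff.rfl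

lemma val_lt_last (a : Fin n) : (a : ℕ) ≤ n - 1 := by omega

lemma nm_mul {f g : Function.End (Fin n)} (hf : f ∈ NearlyMonotonicSet n)
    (hg : g ∈ NearlyMonotonicSet n) : f * g ∈ NearlyMonotonicSet n := by
  rcases hg with hg | ⟨c, rfl⟩
  · rcases hf with hf | ⟨c, rfl⟩
    · left
      constructor
      · intro q hq
        show f (g q) = q
        rw [hg.1 q hq, hf.1 q hq]
      · intro p q hpq hp hq hfp hfq
        show (f (g p) : ℕ) ≤ (f (g q) : ℕ)
        have hgp : (g p : ℕ) < n - 1 := by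
          by_contra h
          have h1 : (g p : ℕ) = n - 1 := by have := val_lt_last (g p); omega
          have := hf.1 (g p) h1
          rw [mul_apply] at hfp
          rw [this] at hfp; omega
        have hgq : (g q : ℕ) < n - 1 := by
          by_contra h
          have h1 : (g q : ℕ) = n - 1 := by have := val_lt_last (g q); omega
          have := hf.1 (g q) h1
          rw [mul_apply] at hfq
          rw [this] at hfq; omega
        exact hf.2 (g p) (g q) (hg.2 p q hpq hp hq hgp hgq) hgp hgq hfp hfq
    · right
      exact ⟨c, rfl⟩
  · right
    exact ⟨f c, rfl⟩

/-- the nearly monotonic submonoid -/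
def NMsub (n : ℕ) : Submonoid (Function.End (Fin n)) where
  carrier := NearlyMonotonicSet n
  mul_mem' := nm_mul
  one_mem' := Or.inl pm_one


lemma unitaryT_val (p q x : Fin n) :
    ((unitaryT p q x : Fin n) : ℕ) = if (x : ℕ) = (p : ℕ) then (q : ℕ) else (x : ℕ) := by
  show ((if x = p then q else x : Fin n) : ℕ) = _
  by_cases h : x = p
  · subst h; rw [if_pos rfl, if_pos rfl]
  · rw [if_neg h, if_neg (fun hv => h (Fin.ext hv))]

lemma gen_subset_nm (h0 : 0 < n) : Gen n h0 ⊆ NearlyMonotonicSet n := by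
  rintro f ((⟨p, q, hq1, hq2, hf | hf⟩ | ⟨p, r, hp, hr, hf⟩) | hf)
  · subst hf
    left
    refine ⟨fun x hx => Fin.ext ?_, fun a b hab ha hb hfa hfb => ?_⟩
    · rw [unitaryT_val]; split_ifs <;> omega
    · rw [val_le_iff] at hab ⊢
      simp only [unitaryT_val] at hfa hfb ⊢
      split_ifs at * <;> omega
  · subst hf
    left
    refine ⟨fun x hx => Fin.ext ?_, fun a b hab ha hb hfa hfb => ?_⟩
    · rw [unitaryT_val]; split_ifs <;> omega
    · rw [val_le_iff] at hab ⊢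
      simp only [unitaryT_val] at hfa hfb ⊢
      split_ifs at * <;> omega
  · subst hf
    left
    refine ⟨fun x hx => Fin.ext ?_, fun a b hab ha hb hfa hfb => ?_⟩
    · rw [unitaryT_val]; split_ifs <;> omega
    · rw [val_le_iff] at hab ⊢
      simp only [unitaryT_val] at hfa hfb ⊢
      split_ifs at * <;> omega
  · replace hf := Set.mem_singleton_iff.mp hf
    subst hf
    right
    exact ⟨⟨0, h0⟩, rfl⟩

lemma gen_adj_up (h0 : 0 < n) {c : ℕ} (h1 : 1 ≤ c) (h2 : c < n - 1) :
    unitaryT (⟨c - 1, by omega⟩ : Fin n) (⟨c, by omega⟩ : Fin n) ∈ Gen n h0 :=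
  Or.inl (Or.inl ⟨⟨c - 1, by omega⟩, ⟨c, by omega⟩, by simp; omega, by simpa using h2,
    Or.inl rfl⟩)

lemma gen_adj_down (h0 : 0 < n) {c : ℕ} (h2 : c + 1 < n - 1) :
    unitaryT (⟨c + 1, by omega⟩ : Fin n) (⟨c, by omega⟩ : Fin n) ∈ Gen n h0 :=
  Or.inl (Or.inl ⟨⟨c, by omega⟩, ⟨c + 1, by omega⟩, rfl, by simpa using h2, Or.inr rfl⟩)

lemma gen_toTop (h0 : 0 < n) {p : Fin n} (hp : (p : ℕ) < n - 1) :
    unitaryT p (⟨n - 1, by omega⟩ : Fin n) ∈ Gen n h0 :=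
  Or.inl (Or.inr ⟨p, ⟨n - 1, by omega⟩, hp, rfl, rfl⟩)

lemma gen_const0 (h0 : 0 < n) : (fun _ => (⟨0, h0⟩ : Fin n)) ∈ Gen n h0 :=
  Or.inr rfl

lemma mem_up (h0 : 0 < n) : ∀ (N : ℕ) (f : Function.End (Fin n)),
    (∀ a b : Fin n, a ≤ b → f a ≤ f b) →
    (∀ a : Fin n, a ≤ f a) →
    (∀ a : Fin n, (a : ℕ) < n - 1 → (f a : ℕ) < n - 1) →
    (∑ i : Fin n, ((f i : ℕ) - (i : ℕ))) ≤ N →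
    f ∈ Submonoid.closure (Gen n h0) := by
  intro N
  induction N with
  | zero =>
    intro f hmono hge hbd hsum
    have hf : f = 1 := by
      funext x
      have h1 : ((f x : ℕ) - (x : ℕ)) = 0 :=
        Finset.sum_eq_zero_iff.mp (Nat.le_zero.mp hsum) x (Finset.mem_univ x)
      have h2 := hge x
      rw [val_le_iff] at h2
      show f x = x
      exact Fin.ext (by omega)
    rw [hf]; exact Submonoid.one_mem _
  | succ N ih =>
    intro f hmono hge hbd hsum
    by_cases hid : ∀ x : Fin n, f x = x
    · have : f = 1 := funext hid
      rw [this]; exact Submonoid.one_mem _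
    · push_neg at hid
      have hDne : (Finset.univ.filter (fun x : Fin n => f x ≠ x)).Nonempty := by
        obtain ⟨x, hx⟩ := hid; exact ⟨x, by simp [hx]⟩
      set i := (Finset.univ.filter (fun x : Fin n => f x ≠ x)).min' hDne with hi
      have hiD := (Finset.univ.filter (fun x : Fin n => f x ≠ x)).min'_mem hDne
      rw [Finset.mem_filter] at hiD
      have hgt : (i : ℕ) < (f i : ℕ) := by
        have h2 := hge i; rw [val_le_iff] at h2
        rcases Nat.lt_or_ge (i : ℕ) (f i : ℕ) with h | h
        · exact h
        · exact absurd (Fin.ext (by omega) : f i = i) hiD.2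
      have hlow : ∀ j : Fin n, (j : ℕ) < (i : ℕ) → f j = j := by
        intro j hj
        by_contra hj2
        have : i ≤ j := Finset.min'_le _ j (by simp [hj2])
        rw [val_le_iff] at this; omega
      have hin1 : (i : ℕ) < n - 1 := by have := val_lt_last (f i); omega
      have hcn : (f i : ℕ) < n - 1 := hbd i hin1
      set c := (f i : ℕ) with hc
      have hc1 : 1 ≤ c := by omega
      set f₂ : Function.End (Fin n) := Function.update f i (⟨c - 1, by omega⟩ : Fin n) with hf2
      have fval2 : ∀ x : Fin n, (f₂ x : ℕ) = if x = i then c - 1 else (f x : ℕ) := by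
        intro x
        by_cases hx : x = i
        · subst hx; rw [if_pos rfl, hf2]; exact congrArg Fin.val (Function.update_self (β := fun _ => Fin n) i _ f)
        · rw [if_neg hx, hf2]; exact congrArg Fin.val (Function.update_of_ne hx _ _)
      have hfeq : f = unitaryT (⟨c - 1, by omega⟩ : Fin n) (⟨c, by omega⟩ : Fin n) * f₂ := by
        funext x
        rw [mul_apply]
        apply Fin.ext
        rw [unitaryT_val, fval2]
        simp only [Fin.val_mk]
        by_cases hx : x = i
        · subst hx; simp; rfl
        · rw [if_neg hx, if_neg]
          have hxv : (x : ℕ) ≠ (i : ℕ) := fun h => hx (Fin.ext h)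
          rcases Nat.lt_or_ge (x : ℕ) (i : ℕ) with h | h
          · rw [hlow x h]; omega
          · have : f i ≤ f x := hmono i x (by rw [val_le_iff]; omega)
            rw [val_le_iff] at this; omega
      rw [hfeq]
      refine Submonoid.mul_mem _ (Submonoid.subset_closure (gen_adj_up h0 hc1 hcn)) ?_
      apply ih f₂
      · intro a b hab
        rw [val_le_iff] at hab ⊢
        rw [fval2, fval2]
        by_cases h1 : a = i <;> by_cases h2 : b = i
        · rw [if_pos h1, if_pos h2]
        · rw [if_pos h1, if_neg h2]
          have hav : (a : ℕ) = (i : ℕ) := by rw [h1]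
          have hbv : (b : ℕ) ≠ (i : ℕ) := fun h => h2 (Fin.ext h)
          have hfb : f i ≤ f b := hmono i b (by rw [val_le_iff]; omega)
          rw [val_le_iff] at hfb
          omega
        · rw [if_neg h1, if_pos h2]
          have hbv : (b : ℕ) = (i : ℕ) := by rw [h2]
          have hav : (a : ℕ) ≠ (i : ℕ) := fun h => h1 (Fin.ext h)
          rw [hlow a (by omega)]
          omega
        · rw [if_neg h1, if_neg h2]
          have := hmono a b (by rw [val_le_iff]; exact hab)
          rw [val_le_iff] at this; omega
      · intro a
        rw [val_le_iff, fval2]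
        by_cases h1 : a = i
        · subst h1; rw [if_pos rfl]; omega
        · rw [if_neg h1]
          have := hge a; rw [val_le_iff] at this; omega
      · intro a ha
        rw [fval2]
        by_cases h1 : a = i
        · rw [if_pos h1]; omega
        · rw [if_neg h1]; exact hbd a ha
      · have e1 : ∑ x : Fin n, ((f x : ℕ) - (x : ℕ)) =
            ((f i : ℕ) - (i : ℕ)) + ∑ x ∈ Finset.univ.erase i, ((f x : ℕ) - (x : ℕ)) :=
          (Finset.add_sum_erase _ _ (Finset.mem_univ i)).symm
        have e2 : ∑ x : Fin n, ((f₂ x : ℕ) - (x : ℕ)) =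
            ((f₂ i : ℕ) - (i : ℕ)) + ∑ x ∈ Finset.univ.erase i, ((f₂ x : ℕ) - (x : ℕ)) :=
          (Finset.add_sum_erase _ _ (Finset.mem_univ i)).symm
        have e3 : ∑ x ∈ Finset.univ.erase i, ((f₂ x : ℕ) - (x : ℕ)) =
            ∑ x ∈ Finset.univ.erase i, ((f x : ℕ) - (x : ℕ)) := by
          refine Finset.sum_congr rfl fun x hx => ?_
          rw [fval2, if_neg (Finset.ne_of_mem_erase hx)]
        have e4 : (f₂ i : ℕ) = c - 1 := by rw [fval2, if_pos rfl]
        rw [e1] at hsum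
        rw [e2, e3, e4]
        omega

lemma mem_down (h0 : 0 < n) : ∀ (N : ℕ) (f : Function.End (Fin n)),
    (∀ a b : Fin n, a ≤ b → f a ≤ f b) →
    (∀ a : Fin n, f a ≤ a) →
    f (⟨n - 1, by omega⟩ : Fin n) = (⟨n - 1, by omega⟩ : Fin n) →
    (∑ i : Fin n, ((i : ℕ) - (f i : ℕ))) ≤ N →
    f ∈ Submonoid.closure (Gen n h0) := by
  intro N
  induction N with
  | zero =>
    intro f hmono hle htop hsum
    have hf : f = 1 := by
      funext x
      have h1 : ((x : ℕ) - (f x : ℕ)) = 0 :=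
        Finset.sum_eq_zero_iff.mp (Nat.le_zero.mp hsum) x (Finset.mem_univ x)
      have h2 := hle x
      rw [val_le_iff] at h2
      show f x = x
      exact Fin.ext (by omega)
    rw [hf]; exact Submonoid.one_mem _
  | succ N ih =>
    intro f hmono hle htop hsum
    by_cases hid : ∀ x : Fin n, f x = x
    · have : f = 1 := funext hid
      rw [this]; exact Submonoid.one_mem _
    · push_neg at hid
      have hDne : (Finset.univ.filter (fun x : Fin n => f x ≠ x)).Nonempty := by
        obtain ⟨x, hx⟩ := hid; exact ⟨x, by simp [hx]⟩
      set i := (Finset.univ.filter (fun x : Fin n => f x ≠ x)).max' hDne with hi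
      have hiD := (Finset.univ.filter (fun x : Fin n => f x ≠ x)).max'_mem hDne
      rw [Finset.mem_filter] at hiD
      have hgt : (f i : ℕ) < (i : ℕ) := by
        have h2 := hle i; rw [val_le_iff] at h2
        rcases Nat.lt_or_ge (f i : ℕ) (i : ℕ) with h | h
        · exact h
        · exact absurd (Fin.ext (by omega) : f i = i) hiD.2
      have hhigh : ∀ j : Fin n, (i : ℕ) < (j : ℕ) → f j = j := by
        intro j hj
        by_contra hj2
        have : j ≤ i := Finset.le_max' _ j (by simp [hj2])
        rw [val_le_iff] at this; omega
      have hitop : (i : ℕ) < n - 1 := by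
        have h1 := val_lt_last i
        rcases Nat.lt_or_ge (i : ℕ) (n - 1) with h | h
        · exact h
        · exfalso
          have hfne : f i ≠ i := hiD.2
          have hie : i = (⟨n - 1, by omega⟩ : Fin n) := Fin.ext (by simp; omega)
          rw [hie] at hfne
          exact hfne htop
      set c := (f i : ℕ) with hc
      have hc1 : c + 1 < n - 1 := by omega
      set f₂ : Function.End (Fin n) := Function.update f i (⟨c + 1, by omega⟩ : Fin n) with hf2
      have fval2 : ∀ x : Fin n, (f₂ x : ℕ) = if x = i then c + 1 else (f x : ℕ) := by
        intro x
        by_cases hx : x = i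
        · subst hx; rw [if_pos rfl, hf2]; exact congrArg Fin.val (Function.update_self (β := fun _ => Fin n) i _ f)
        · rw [if_neg hx, hf2]; exact congrArg Fin.val (Function.update_of_ne hx _ _)
      have hfeq : f = unitaryT (⟨c + 1, by omega⟩ : Fin n) (⟨c, by omega⟩ : Fin n) * f₂ := by
        funext x
        rw [mul_apply]
        apply Fin.ext
        rw [unitaryT_val, fval2]
        simp only [Fin.val_mk]
        by_cases hx : x = i
        · subst hx; simp; rfl
        · rw [if_neg hx, if_neg]
          have hxv : (x : ℕ) ≠ (i : ℕ) := fun h => hx (Fin.ext h)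
          rcases Nat.lt_or_ge (x : ℕ) (i : ℕ) with h | h
          · have : f x ≤ f i := hmono x i (by rw [val_le_iff]; omega)
            rw [val_le_iff] at this; omega
          · rw [hhigh x (by omega)]; omega
      rw [hfeq]
      refine Submonoid.mul_mem _ (Submonoid.subset_closure (gen_adj_down h0 hc1)) ?_
      apply ih f₂
      · intro a b hab
        rw [val_le_iff] at hab ⊢
        rw [fval2, fval2]
        by_cases h1 : a = i <;> by_cases h2 : b = i
        · rw [if_pos h1, if_pos h2]
        · rw [if_pos h1, if_neg h2]
          have hav : (a : ℕ) = (i : ℕ) := by rw [h1]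
          have hbv : (b : ℕ) ≠ (i : ℕ) := fun h => h2 (Fin.ext h)
          rw [hhigh b (by omega)]
          omega
        · rw [if_neg h1, if_pos h2]
          have hbv : (b : ℕ) = (i : ℕ) := by rw [h2]
          have hav : (a : ℕ) ≠ (i : ℕ) := fun h => h1 (Fin.ext h)
          have hfa : f a ≤ f i := hmono a i (by rw [val_le_iff]; omega)
          rw [val_le_iff] at hfa
          omega
        · rw [if_neg h1, if_neg h2]
          have := hmono a b (by rw [val_le_iff]; exact hab)
          rw [val_le_iff] at this; omega
      · intro a
        rw [val_le_iff, fval2]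
        by_cases h1 : a = i
        · subst h1; rw [if_pos rfl]; omega
        · rw [if_neg h1]
          have := hle a; rw [val_le_iff] at this; omega
      · apply Fin.ext
        have hne : (⟨n - 1, by omega⟩ : Fin n) ≠ i := by
          intro h; rw [← h] at hitop; simp only [Fin.val_mk] at hitop; omega
        rw [fval2, if_neg hne, htop]
      · have e1 : ∑ x : Fin n, ((x : ℕ) - (f x : ℕ)) =
            ((i : ℕ) - (f i : ℕ)) + ∑ x ∈ Finset.univ.erase i, ((x : ℕ) - (f x : ℕ)) :=
          (Finset.add_sum_erase _ _ (Finset.mem_univ i)).symm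
        have e2 : ∑ x : Fin n, ((x : ℕ) - (f₂ x : ℕ)) =
            ((i : ℕ) - (f₂ i : ℕ)) + ∑ x ∈ Finset.univ.erase i, ((x : ℕ) - (f₂ x : ℕ)) :=
          (Finset.add_sum_erase _ _ (Finset.mem_univ i)).symm
        have e3 : ∑ x ∈ Finset.univ.erase i, ((x : ℕ) - (f₂ x : ℕ)) =
            ∑ x ∈ Finset.univ.erase i, ((x : ℕ) - (f x : ℕ)) := by
          refine Finset.sum_congr rfl fun x hx => ?_
          rw [fval2, if_neg (Finset.ne_of_mem_erase hx)]
        have e4 : (f₂ i : ℕ) = c + 1 := by rw [fval2, if_pos rfl]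
        rw [e1] at hsum
        rw [e2, e3, e4]
        omega
def constE (c : Fin n) : Function.End (Fin n) := fun _ => c

@[simp] lemma constE_apply (c x : Fin n) : constE c x = c := rfl

lemma unitaryT_apply_eq (p q : Fin n) : unitaryT p q p = q := if_pos rfl

lemma unitaryT_apply_ne (p q : Fin n) {x : Fin n} (h : x ≠ p) : unitaryT p q x = x := if_neg h

lemma fin_val_max (a b : Fin n) : ((max a b : Fin n) : ℕ) = max (a : ℕ) (b : ℕ) := by
  rcases le_total a b with h | h
  · rw [max_eq_right h]; rw [val_le_iff] at h; omega
  · rw [max_eq_left h]; rw [val_le_iff] at h; omega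

lemma mem_mono (hn : 2 ≤ n) (f : Function.End (Fin n))
    (hmono : ∀ a b : Fin n, a ≤ b → f a ≤ f b)
    (htop : f (⟨n - 1, by omega⟩ : Fin n) = (⟨n - 1, by omega⟩ : Fin n))
    (hbd : ∀ a : Fin n, (a : ℕ) < n - 1 → (f a : ℕ) < n - 1) :
    f ∈ Submonoid.closure (Gen n (Nat.zero_lt_of_lt hn)) := by
  classical
  set g : Function.End (Fin n) := fun x => max (f x) x with hg
  set h : Function.End (Fin n) := fun y =>
    if hy : (Finset.univ.filter (fun i : Fin n => g i ≤ y)).Nonempty then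
      f ((Finset.univ.filter (fun i : Fin n => g i ≤ y)).max' hy) else y with hh
  have hgval : ∀ x : Fin n, (g x : ℕ) = max ((f x : ℕ)) ((x : ℕ)) := fun x => fin_val_max _ _
  have hcomp : ∀ x : Fin n, h (g x) = f x := by
    intro x
    have hxmem : x ∈ Finset.univ.filter (fun i : Fin n => g i ≤ g x) := by
      simp [Finset.mem_filter]
    have hne : (Finset.univ.filter (fun i : Fin n => g i ≤ g x)).Nonempty := ⟨x, hxmem⟩
    rw [hh]
    simp only [dif_pos hne]
    set J := (Finset.univ.filter (fun i : Fin n => g i ≤ g x)).max' hne with hJ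
    have hxJ : x ≤ J := Finset.le_max' _ x hxmem
    have hJmem := (Finset.univ.filter (fun i : Fin n => g i ≤ g x)).max'_mem hne
    rw [Finset.mem_filter] at hJmem
    have hgJ : g J ≤ g x := hJmem.2
    refine le_antisymm ?_ (hmono x J hxJ)
    rcases max_choice (f x) x with hcase | hcase
    · calc f J ≤ g J := le_max_left _ _
        _ ≤ g x := hgJ
        _ = f x := hcase
    · have hJx : J ≤ x := le_trans (le_max_right (f J) J) (le_trans hgJ (le_of_eq hcase))
      have : J = x := le_antisymm hJx hxJ
      rw [this]
  have hfeq : f = h * g := by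
    funext x
    rw [mul_apply, hcomp]
  rw [hfeq]
  refine Submonoid.mul_mem _ ?_ ?_
  · -- h via mem_down
    apply mem_down (by omega) (∑ i : Fin n, ((i : ℕ) - (h i : ℕ))) h _ _ _ le_rfl
    · -- monotone
      intro a b hab
      rw [hh]
      by_cases hbne : (Finset.univ.filter (fun i : Fin n => g i ≤ b)).Nonempty
      · simp only [dif_pos hbne]
        by_cases hane : (Finset.univ.filter (fun i : Fin n => g i ≤ a)).Nonempty
        · simp only [dif_pos hane]
          apply hmono
          apply Finset.le_max'
          have := (Finset.univ.filter (fun i : Fin n => g i ≤ a)).max'_mem hane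
          rw [Finset.mem_filter] at this
          rw [Finset.mem_filter]
          exact ⟨Finset.mem_univ _, le_trans this.2 hab⟩
        · simp only [dif_neg hane]
          set Jb := (Finset.univ.filter (fun i : Fin n => g i ≤ b)).max' hbne with hJb
          have hz : ¬ g (⟨0, by omega⟩ : Fin n) ≤ a := by
            intro hza
            exact hane ⟨⟨0, by omega⟩, by simp [Finset.mem_filter, hza]⟩
          have h1 : a < g (⟨0, by omega⟩ : Fin n) := not_le.mp hz
          have h1v : (a : ℕ) < (g (⟨0, by omega⟩ : Fin n) : ℕ) := h1
          rw [hgval] at h1v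
          simp only [Fin.val_mk] at h1v
          have h2 : f (⟨0, by omega⟩ : Fin n) ≤ f Jb := by
            apply hmono
            rw [val_le_iff]
            simp only [Fin.val_mk]
            omega
          rw [val_le_iff] at h2
          rw [val_le_iff]
          omega
      · simp only [dif_neg hbne]
        have hane : ¬ (Finset.univ.filter (fun i : Fin n => g i ≤ a)).Nonempty := by
          intro ⟨x, hx⟩
          rw [Finset.mem_filter] at hx
          exact hbne ⟨x, by rw [Finset.mem_filter]; exact ⟨hx.1, le_trans hx.2 hab⟩⟩
        simp only [dif_neg hane]
        exact hab
    · -- h ≤ id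
      intro y
      rw [hh]
      by_cases hy : (Finset.univ.filter (fun i : Fin n => g i ≤ y)).Nonempty
      · simp only [dif_pos hy]
        have := (Finset.univ.filter (fun i : Fin n => g i ≤ y)).max'_mem hy
        rw [Finset.mem_filter] at this
        exact le_trans (le_max_left _ _) this.2
      · simp only [dif_neg hy]
        exact le_rfl
    · -- h top = top
      have htopmem : (⟨n - 1, by omega⟩ : Fin n) ∈
          Finset.univ.filter (fun i : Fin n => g i ≤ (⟨n - 1, by omega⟩ : Fin n)) := by
        rw [Finset.mem_filter]
        exact ⟨Finset.mem_univ _, by rw [val_le_iff]; simp only [Fin.val_mk]; exact val_lt_last _⟩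
      have hne : (Finset.univ.filter
          (fun i : Fin n => g i ≤ (⟨n - 1, by omega⟩ : Fin n))).Nonempty := ⟨_, htopmem⟩
      rw [hh]
      simp only [dif_pos hne]
      have hJle : (Finset.univ.filter
          (fun i : Fin n => g i ≤ (⟨n - 1, by omega⟩ : Fin n))).max' hne = ⟨n - 1, by omega⟩ := by
        refine le_antisymm ?_ (Finset.le_max' _ _ htopmem)
        rw [val_le_iff]; simp only [Fin.val_mk]; exact val_lt_last _
      rw [hJle, htop]
  · -- g via mem_up
    apply mem_up (by omega) (∑ i : Fin n, ((g i : ℕ) - (i : ℕ))) g _ _ _ le_rfl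
    · intro a b hab
      exact max_le_max (hmono a b hab) hab
    · intro a
      exact le_max_right _ _
    · intro a ha
      rw [hgval]
      have := hbd a ha
      omega

lemma toTop_mem (hn : 2 ≤ n) (T : Finset (Fin n)) (hT : ∀ p ∈ T, (p : ℕ) < n - 1) :
    ∃ g ∈ Submonoid.closure (Gen n (Nat.zero_lt_of_lt hn)), ∀ x : Fin n,
      g x = if x ∈ T then (⟨n - 1, by omega⟩ : Fin n) else x := by
  classical
  induction T using Finset.induction_on with
  | empty => exact ⟨1, Submonoid.one_mem _, fun x => by simp [one_apply]⟩
  | @insert a T' ha ih =>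
    obtain ⟨g, hgM, hgval⟩ := ih (fun p hp => hT p (Finset.mem_insert_of_mem hp))
    have haT : (a : ℕ) < n - 1 := hT a (Finset.mem_insert_self a T')
    refine ⟨unitaryT a (⟨n - 1, by omega⟩ : Fin n) * g,
      Submonoid.mul_mem _ (Submonoid.subset_closure (gen_toTop _ haT)) hgM, fun x => ?_⟩
    have htopne : (⟨n - 1, by omega⟩ : Fin n) ≠ a := by
      intro hcon
      have : (a : ℕ) = n - 1 := by rw [← hcon]
      omega
    rw [mul_apply, hgval]
    by_cases hx : x ∈ T'
    · rw [if_pos hx, if_pos (Finset.mem_insert_of_mem hx), unitaryT_apply_ne _ _ htopne]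
    · rw [if_neg hx]
      by_cases hxa : x = a
      · subst hxa
        rw [if_pos (Finset.mem_insert_self x T'), unitaryT_apply_eq]
      · rw [if_neg (by simp [hxa, hx]), unitaryT_apply_ne _ _ hxa]

lemma const_mem (hn : 2 ≤ n) (c : Fin n) :
    constE c ∈ Submonoid.closure (Gen n (Nat.zero_lt_of_lt hn)) := by
  have aux : ∀ k : ℕ, ∀ _hk : k ≤ n - 2,
      constE (⟨k, by omega⟩ : Fin n) ∈
        Submonoid.closure (Gen n (Nat.zero_lt_of_lt hn)) := by
    intro k
    induction k with
    | zero => exact fun _ => Submonoid.subset_closure (gen_const0 (by omega) : (constE (⟨0, by omega⟩ : Fin n)) ∈ _)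
    | succ k ih =>
      intro hk
      have hmem := ih (by omega)
      have heq : constE (⟨k + 1, by omega⟩ : Fin n) =
          unitaryT (⟨k + 1 - 1, by omega⟩ : Fin n) (⟨k + 1, by omega⟩ : Fin n) *
            constE (⟨k, by omega⟩ : Fin n) := by
        funext x
        rw [mul_apply]
        simp only [constE_apply]
        have : (⟨k, by omega⟩ : Fin n) = (⟨k + 1 - 1, by omega⟩ : Fin n) :=
          Fin.ext (by simp only [Fin.val_mk]; omega)
        rw [this, unitaryT_apply_eq]
      rw [heq]
      exact Submonoid.mul_mem _
        (Submonoid.subset_closure (gen_adj_up (by omega) (by omega) (by omega))) hmem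
  rcases Nat.lt_or_ge (c : ℕ) (n - 1) with hc | hc
  · have : c = (⟨(c : ℕ), by omega⟩ : Fin n) := Fin.ext rfl
    rw [this]
    exact aux (c : ℕ) (by omega)
  · have hc1 : (c : ℕ) = n - 1 := by have := val_lt_last c; omega
    have heq : constE c =
        unitaryT (⟨0, by omega⟩ : Fin n) (⟨n - 1, by omega⟩ : Fin n) *
          constE (⟨0, by omega⟩ : Fin n) := by
      funext x
      rw [mul_apply]
      simp only [constE_apply]
      rw [unitaryT_apply_eq]
      exact Fin.ext (by simp only [Fin.val_mk]; omega)
    rw [heq]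
    exact Submonoid.mul_mem _
      (Submonoid.subset_closure (gen_toTop (by omega) (by simp; omega))) (aux 0 (by omega))

lemma mem_pm (hn : 2 ≤ n) (f : Function.End (Fin n)) (hf : PartiallyMonotonic f) :
    f ∈ Submonoid.closure (Gen n (Nat.zero_lt_of_lt hn)) := by
  classical
  have htop : f (⟨n - 1, by omega⟩ : Fin n) = (⟨n - 1, by omega⟩ : Fin n) :=
    hf.1 _ (by simp)
  set S : Finset (Fin n) :=
    Finset.univ.filter (fun p : Fin n => (p : ℕ) < n - 1 ∧ (f p : ℕ) < n - 1) with hS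
  have hSmem : ∀ p : Fin n, p ∈ S ↔ ((p : ℕ) < n - 1 ∧ (f p : ℕ) < n - 1) := by
    intro p; rw [hS, Finset.mem_filter]; simp
  have hfS : ∀ p q : Fin n, p ∈ S → q ∈ S → p ≤ q → f p ≤ f q := by
    intro p q hp hq hpq
    rw [hSmem] at hp hq
    exact hf.2 p q hpq hp.1 hq.1 hp.2 hq.2
  by_cases hSne : S.Nonempty
  case neg =>
    have hfc : f = constE (⟨n - 1, by omega⟩ : Fin n) := by
      funext x
      rcases Nat.lt_or_ge (x : ℕ) (n - 1) with hx | hx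
      · have hxS : ¬ (f x : ℕ) < n - 1 := by
          intro hc
          exact hSne ⟨x, (hSmem x).mpr ⟨hx, hc⟩⟩
        have := val_lt_last (f x)
        exact Fin.ext (by simp only [constE_apply, Fin.val_mk]; omega)
      · have hxe : x = (⟨n - 1, by omega⟩ : Fin n) := by
          have := val_lt_last x
          exact Fin.ext (by simp only [Fin.val_mk]; omega)
        rw [hxe, htop]; rfl
    rw [hfc]; exact const_mem hn _
  case pos =>
    set T : Finset (Fin n) :=
      Finset.univ.filter (fun p : Fin n => (p : ℕ) < n - 1 ∧ ¬ (f p : ℕ) < n - 1) with hT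
    have hTmem : ∀ p : Fin n, p ∈ T ↔ ((p : ℕ) < n - 1 ∧ ¬ (f p : ℕ) < n - 1) := by
      intro p; rw [hT, Finset.mem_filter]; simp
    obtain ⟨g, hgM, hgval⟩ := toTop_mem hn T
      (fun p hp => ((hTmem p).mp hp).1)
    set h : Function.End (Fin n) := fun x =>
      if _hx : (x : ℕ) < n - 1 then
        (if hx2 : ((S.filter (fun s => s ≤ x)).Nonempty) then
          f ((S.filter (fun s => s ≤ x)).max' hx2)
         else f (S.min' hSne))
      else (⟨n - 1, by omega⟩ : Fin n) with hh
    have hhM : h ∈ Submonoid.closure (Gen n (Nat.zero_lt_of_lt hn)) := by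
      apply mem_mono hn
      · -- monotone
        intro a b hab
        simp only [hh]
        by_cases hbv : (b : ℕ) < n - 1
        · have hav : (a : ℕ) < n - 1 := by rw [val_le_iff] at hab; omega
          simp only [dif_pos hav, dif_pos hbv]
          by_cases hane : (S.filter (fun s => s ≤ a)).Nonempty
          · have hbne : (S.filter (fun s => s ≤ b)).Nonempty := by
              obtain ⟨x, hx⟩ := hane
              rw [Finset.mem_filter] at hx
              exact ⟨x, Finset.mem_filter.mpr ⟨hx.1, le_trans hx.2 hab⟩⟩
            simp only [dif_pos hane, dif_pos hbne]
            have hJa := (S.filter (fun s => s ≤ a)).max'_mem hane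
            have hJb := (S.filter (fun s => s ≤ b)).max'_mem hbne
            rw [Finset.mem_filter] at hJa hJb
            apply hfS _ _ hJa.1 hJb.1
            apply Finset.le_max'
            exact Finset.mem_filter.mpr ⟨hJa.1, le_trans hJa.2 hab⟩
          · simp only [dif_neg hane]
            by_cases hbne : (S.filter (fun s => s ≤ b)).Nonempty
            · simp only [dif_pos hbne]
              have hJb := (S.filter (fun s => s ≤ b)).max'_mem hbne
              rw [Finset.mem_filter] at hJb
              exact hfS _ _ (S.min'_mem hSne) hJb.1 (Finset.min'_le S _ hJb.1)
            · simp only [dif_neg hbne]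
              exact le_rfl
        · simp only [dif_neg hbv]
          rw [val_le_iff]
          simp only [Fin.val_mk]
          exact val_lt_last _
      · -- h top = top
        simp only [hh]
        rw [dif_neg (fun hcc => Nat.lt_irrefl (n - 1) hcc)]
      · -- bounded
        intro a ha
        simp only [hh]
        rw [dif_pos ha]
        by_cases hane : (S.filter (fun s => s ≤ a)).Nonempty
        · rw [dif_pos hane]
          have hJa := (S.filter (fun s => s ≤ a)).max'_mem hane
          rw [Finset.mem_filter] at hJa
          exact ((hSmem _).mp hJa.1).2
        · rw [dif_neg hane]
          exact ((hSmem _).mp (S.min'_mem hSne)).2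
    have hfeq : f = h * g := by
      funext x
      rw [mul_apply, hgval x]
      rcases Nat.lt_or_ge (x : ℕ) (n - 1) with hx | hx
      · by_cases hfx : (f x : ℕ) < n - 1
        · have hxT : x ∉ T := fun hc => ((hTmem x).mp hc).2 hfx
          rw [if_neg hxT]
          have hxS : x ∈ S := (hSmem x).mpr ⟨hx, hfx⟩
          have hxmem : x ∈ S.filter (fun s => s ≤ x) :=
            Finset.mem_filter.mpr ⟨hxS, le_rfl⟩
          have hne : (S.filter (fun s => s ≤ x)).Nonempty := ⟨x, hxmem⟩
          simp only [hh]
          rw [dif_pos hx, dif_pos hne]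
          have hmx : (S.filter (fun s => s ≤ x)).max' hne = x :=
            le_antisymm (Finset.mem_filter.mp ((S.filter (fun s => s ≤ x)).max'_mem hne)).2
              (Finset.le_max' _ x hxmem)
          rw [hmx]
        · have hxT : x ∈ T := (hTmem x).mpr ⟨hx, hfx⟩
          rw [if_pos hxT]
          simp only [hh]
          rw [dif_neg (fun hcc => Nat.lt_irrefl (n - 1) hcc)]
          have := val_lt_last (f x)
          exact Fin.ext (by simp only [Fin.val_mk]; omega)
      · have hxT : x ∉ T := fun hc => by have := ((hTmem x).mp hc).1; omega
        rw [if_neg hxT]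
        simp only [hh]
        rw [dif_neg (by omega)]
        have hxe : x = (⟨n - 1, by omega⟩ : Fin n) := by
          have := val_lt_last x
          exact Fin.ext (by simp only [Fin.val_mk]; omega)
        conv_lhs => rw [hxe]
        exact htop
    rw [hfeq]
    exact Submonoid.mul_mem _ hhM hgM

lemma closure_eq_nm (hn : 2 ≤ n) :
    (Submonoid.closure (Gen n (Nat.zero_lt_of_lt hn)) : Set (Function.End (Fin n))) =
      NearlyMonotonicSet n := by
  apply Set.Subset.antisymm
  · intro f hf
    have hle : Submonoid.closure (Gen n (Nat.zero_lt_of_lt hn)) ≤ NMsub n :=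
      Submonoid.closure_le.mpr (gen_subset_nm (by omega))
    exact hle hf
  · rintro f (hf | ⟨c, rfl⟩)
    · exact mem_pm hn f hf
    · exact const_mem hn c

lemma sm_step {k N : ℕ} (v : Fin k → Fin N) (hv : StrictMono v) :
    ∀ d : ℕ, ∀ i j : Fin k, (j : ℕ) = (i : ℕ) + d → (v i : ℕ) + d ≤ (v j : ℕ) := by
  intro d
  induction d with
  | zero =>
    intro i j hij
    have : i = j := Fin.ext (by omega)
    rw [this]
    omega
  | succ d ih =>
    intro i j hij
    have hjlt : (i : ℕ) + d < k := by have := j.isLt; omega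
    have h1 := ih i ⟨(i : ℕ) + d, hjlt⟩ (by simp only [Fin.val_mk])
    have h2 : v ⟨(i : ℕ) + d, hjlt⟩ < v j := by
      apply hv
      rw [Fin.lt_def]
      simp only [Fin.val_mk]
      omega
    rw [Fin.lt_def] at h2
    omega

lemma emb_ge {k N : ℕ} (v : Fin k → Fin N) (hv : StrictMono v) (i : Fin k) :
    (i : ℕ) ≤ (v i : ℕ) := by
  have h0 : (0 : ℕ) < k := i.pos
  have := sm_step v hv (i : ℕ) ⟨0, h0⟩ i (by simp only [Fin.val_mk]; omega)
  have := (v ⟨0, h0⟩).isLt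
  omega

lemma emb_bound {k N : ℕ} (v : Fin k → Fin N) (hv : StrictMono v) (i : Fin k) :
    (v i : ℕ) ≤ N - k + (i : ℕ) := by
  have h0 : (0 : ℕ) < k := i.pos
  have hlast : k - 1 < k := by omega
  have hival := i.isLt
  have := sm_step v hv ((k - 1) - (i : ℕ)) i ⟨k - 1, hlast⟩ (by simp only [Fin.val_mk]; omega)
  have := (v ⟨k - 1, hlast⟩).isLt
  omega

lemma orderEmb_val {N k : ℕ} (s : Finset (Fin N)) (h : s.card = k) (G : Fin k → Fin N)
    (hmem : ∀ x, G x ∈ s) (hsm : StrictMono G) (idx : Fin k) :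
    ((s.orderEmbOfFin h idx : Fin N) : ℕ) = ((G idx : Fin N) : ℕ) := by
  rw [← Finset.orderEmbOfFin_unique h hmem hsm]

/-- shift a monotone map to a strictly monotone one -/
def upG {m k : ℕ} (g : Fin k → Fin m) : Fin k → Fin (m - 1 + k) :=
  fun i => ⟨(g i : ℕ) + (i : ℕ), by
    have h1 := (g i).isLt; have h2 := i.isLt; omega⟩

def downG {m k : ℕ} (hm : 1 ≤ m) (v : Fin k → Fin (m - 1 + k)) : Fin k → Fin m :=
  fun i => ⟨min ((v i : ℕ) - (i : ℕ)) (m - 1), by omega⟩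

lemma upG_val {m k : ℕ} (g : Fin k → Fin m) (i : Fin k) :
    (upG g i : ℕ) = (g i : ℕ) + (i : ℕ) := rfl

lemma upG_sm {m k : ℕ} {g : Fin k → Fin m} (hg : Monotone g) : StrictMono (upG g) := by
  intro a b hab
  rw [Fin.lt_def]
  rw [upG_val, upG_val]
  have h1 : g a ≤ g b := hg (le_of_lt hab)
  rw [val_le_iff] at h1
  rw [Fin.lt_def] at hab
  omega

lemma downG_val {m k : ℕ} (hm : 1 ≤ m) {v : Fin k → Fin (m - 1 + k)} (hsm : StrictMono v)
    (i : Fin k) : (downG hm v i : ℕ) = (v i : ℕ) - (i : ℕ) := by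
  have hb := emb_bound v hsm i
  show min ((v i : ℕ) - (i : ℕ)) (m - 1) = (v i : ℕ) - (i : ℕ)
  omega

lemma downG_mono {m k : ℕ} (hm : 1 ≤ m) {v : Fin k → Fin (m - 1 + k)} (hsm : StrictMono v) :
    Monotone (downG hm v) := by
  intro a b hab
  rw [val_le_iff, downG_val hm hsm, downG_val hm hsm]
  have h1 := emb_ge v hsm a
  rw [val_le_iff] at hab
  have h2 := sm_step v hsm ((b : ℕ) - (a : ℕ)) a b (by omega)
  omega

lemma upG_downG {m k : ℕ} (hm : 1 ≤ m) {v : Fin k → Fin (m - 1 + k)} (hsm : StrictMono v) :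
    upG (downG hm v) = v := by
  funext i
  apply Fin.ext
  rw [upG_val, downG_val hm hsm]
  have := emb_ge v hsm i
  omega

lemma downG_upG {m k : ℕ} (hm : 1 ≤ m) {g : Fin k → Fin m} (hg : Monotone g) :
    downG hm (upG g) = g := by
  funext i
  apply Fin.ext
  rw [downG_val hm (upG_sm hg), upG_val]
  omega

lemma mono_card (m k : ℕ) (hm : 1 ≤ m) :
    (Finset.univ.filter (fun g : Fin k → Fin m => Monotone g)).card =
      (m + k - 1).choose k := by
  classical
  have key : (Finset.univ.filter (fun g : Fin k → Fin m => Monotone g)).card =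
      (Finset.powersetCard k (Finset.univ : Finset (Fin (m - 1 + k)))).card := by
    apply Finset.card_bij'
      (i := fun g _ => Finset.univ.image (upG g))
      (j := fun s hs => downG hm (s.orderEmbOfFin (Finset.mem_powersetCard_univ.mp hs)))
    · intro s hs
      exact Finset.mem_filter.mpr ⟨Finset.mem_univ _,
        downG_mono hm (s.orderEmbOfFin (Finset.mem_powersetCard_univ.mp hs)).strictMono⟩
    · intro g hg
      have hg2 : Monotone g := (Finset.mem_filter.mp hg).2
      have he' : ∀ h', ⇑((Finset.univ.image (upG g)).orderEmbOfFin h') = upG g := fun h' =>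
        (Finset.orderEmbOfFin_unique h'
          (fun x => Finset.mem_image_of_mem _ (Finset.mem_univ x)) (upG_sm hg2)).symm
      rw [he', downG_upG hm hg2]
    · intro s hs
      have hcard := Finset.mem_powersetCard_univ.mp hs
      rw [upG_downG hm (s.orderEmbOfFin hcard).strictMono]
      apply Finset.coe_injective
      rw [Finset.coe_image, Finset.coe_univ, Set.image_univ]
      exact Finset.range_orderEmbOfFin s hcard
    · intro g hg
      have hg2 : Monotone g := (Finset.mem_filter.mp hg).2
      rw [Finset.mem_powersetCard_univ,
        Finset.card_image_of_injective _ (upG_sm hg2).injective]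
      simp
  rw [key, Finset.card_powersetCard, Finset.card_univ, Fintype.card_fin]
  congr 1
  omega

def castEmb {n : ℕ} (p : Fin (n - 1)) : Fin n :=
  ⟨(p : ℕ), by have := p.isLt; omega⟩

@[simp] lemma castEmb_val {n : ℕ} (p : Fin (n - 1)) : ((castEmb p : Fin n) : ℕ) = (p : ℕ) := rfl

lemma castEmb_back {n : ℕ} (p : Fin (n - 1)) (h : ((castEmb p : Fin n) : ℕ) < n - 1) :
    (⟨((castEmb p : Fin n) : ℕ), h⟩ : Fin (n - 1)) = p := Fin.ext rfl

def toMono (hn : 2 ≤ n) (S : Finset (Fin (n - 1))) (f : Fin n → Fin n) :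
    Fin S.card → Fin (n - 1) :=
  fun i => ⟨min ((f (castEmb (S.orderEmbOfFin rfl i)) : ℕ)) (n - 2), by omega⟩

def fromMono (hn : 2 ≤ n) (S : Finset (Fin (n - 1))) (g : Fin S.card → Fin (n - 1)) :
    Fin n → Fin n :=
  fun x => if hx : (x : ℕ) < n - 1 then
      (if hS : (⟨(x : ℕ), hx⟩ : Fin (n - 1)) ∈ S then
        castEmb (g ((S.orderIsoOfFin rfl).symm ⟨⟨(x : ℕ), hx⟩, hS⟩))
      else ⟨n - 1, by omega⟩)
    else ⟨n - 1, by omega⟩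

lemma toMono_val (hn : 2 ≤ n) (S : Finset (Fin (n - 1))) (f : Fin n → Fin n) (i : Fin S.card)
    (h : (f (castEmb (S.orderEmbOfFin rfl i)) : ℕ) < n - 1) :
    ((toMono hn S f i : Fin (n - 1)) : ℕ) = (f (castEmb (S.orderEmbOfFin rfl i)) : ℕ) := by
  show min _ _ = _
  omega

lemma fromMono_top (hn : 2 ≤ n) (S : Finset (Fin (n - 1))) (g : Fin S.card → Fin (n - 1))
    {x : Fin n} (hx : ¬ (x : ℕ) < n - 1) :
    fromMono hn S g x = (⟨n - 1, by omega⟩ : Fin n) := dif_neg hx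

lemma fromMono_notmem (hn : 2 ≤ n) (S : Finset (Fin (n - 1))) (g : Fin S.card → Fin (n - 1))
    {x : Fin n} (hx : (x : ℕ) < n - 1) (hS : (⟨(x : ℕ), hx⟩ : Fin (n - 1)) ∉ S) :
    fromMono hn S g x = (⟨n - 1, by omega⟩ : Fin n) := by
  rw [fromMono, dif_pos hx, dif_neg hS]

lemma fromMono_mem (hn : 2 ≤ n) (S : Finset (Fin (n - 1))) (g : Fin S.card → Fin (n - 1))
    {x : Fin n} (hx : (x : ℕ) < n - 1) (hS : (⟨(x : ℕ), hx⟩ : Fin (n - 1)) ∈ S) :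
    fromMono hn S g x =
      castEmb (g ((S.orderIsoOfFin rfl).symm ⟨⟨(x : ℕ), hx⟩, hS⟩)) := by
  rw [fromMono, dif_pos hx, dif_pos hS]

lemma ordEmb_symm {n : ℕ} (S : Finset (Fin (n - 1))) (z : {x // x ∈ S}) :
    S.orderEmbOfFin rfl ((S.orderIsoOfFin rfl).symm z) = (z : Fin (n - 1)) := by
  rw [← Finset.coe_orderIsoOfFin_apply, OrderIso.apply_symm_apply]

lemma iso_symm_mono {n : ℕ} (S : Finset (Fin (n - 1))) (z w : {x // x ∈ S}) (h : z ≤ w) :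
    (S.orderIsoOfFin rfl).symm z ≤ (S.orderIsoOfFin rfl).symm w := by
  exact (OrderIso.le_iff_le _).mpr h

lemma fiber_card (hn : 2 ≤ n) (S : Finset (Fin (n - 1))) :
    ((Finset.univ.filter (fun f : Fin n → Fin n => PartiallyMonotonic f)).filter
      (fun f => Finset.univ.filter
        (fun p : Fin (n - 1) => (f (castEmb p) : ℕ) < n - 1) = S)).card
      = ((n - 1) + S.card - 1).choose S.card := by
  classical
  rw [← mono_card (n - 1) S.card (by omega)]
  refine Finset.card_bij' (fun f _ => toMono hn S f) (fun g _ => fromMono hn S g)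
    ?hi ?hj ?left ?right
  case hj =>
    intro g hg
    beta_reduce
    have hgm : Monotone g := (Finset.mem_filter.mp hg).2
    have hpm : PartiallyMonotonic (fromMono hn S g) := by
      constructor
      · intro q hq
        rw [fromMono_top hn S g (by omega)]
        exact Fin.ext (by simp only [Fin.val_mk]; omega)
      · intro p q hpq hp hq hfp hfq
        have hpS : (⟨(p : ℕ), hp⟩ : Fin (n - 1)) ∈ S := by
          by_contra hc
          rw [fromMono_notmem hn S g hp hc] at hfp
          simp only [Fin.val_mk] at hfp
          omega
        have hqS : (⟨(q : ℕ), hq⟩ : Fin (n - 1)) ∈ S := by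
          by_contra hc
          rw [fromMono_notmem hn S g hq hc] at hfq
          simp only [Fin.val_mk] at hfq
          omega
        rw [val_le_iff, fromMono_mem hn S g hp hpS, fromMono_mem hn S g hq hqS]
        rw [castEmb_val, castEmb_val, ← val_le_iff]
        apply hgm
        apply iso_symm_mono
        rw [Subtype.mk_le_mk, val_le_iff]
        simp only [Fin.val_mk]
        exact hpq
    refine Finset.mem_filter.mpr ⟨Finset.mem_filter.mpr ⟨Finset.mem_univ _, hpm⟩, ?_⟩
    ext p
    rw [Finset.mem_filter]
    have hpx : ((castEmb p : Fin n) : ℕ) < n - 1 := by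
      have := p.isLt; simp only [castEmb_val]; omega
    constructor
    · rintro ⟨-, hval⟩
      by_contra hc
      have hc2 : (⟨((castEmb p : Fin n) : ℕ), hpx⟩ : Fin (n - 1)) ∉ S := by
        rw [castEmb_back]; exact hc
      rw [fromMono_notmem hn S g hpx hc2] at hval
      simp only [Fin.val_mk] at hval
      omega
    · intro hpS
      refine ⟨Finset.mem_univ _, ?_⟩
      have hc2 : (⟨((castEmb p : Fin n) : ℕ), hpx⟩ : Fin (n - 1)) ∈ S := by
        rw [castEmb_back]; exact hpS
      rw [fromMono_mem hn S g hpx hc2, castEmb_val]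
      exact (g _).isLt
  case left =>
    intro f hf
    beta_reduce
    have hf1 := Finset.mem_filter.mp hf
    have hpm : PartiallyMonotonic f := (Finset.mem_filter.mp hf1.1).2
    have hsigma := hf1.2
    funext x
    rcases Nat.lt_or_ge (x : ℕ) (n - 1) with hx | hx
    · set px : Fin (n - 1) := ⟨(x : ℕ), hx⟩ with hpx
      have hcx : castEmb px = x := Fin.ext rfl
      by_cases hS : px ∈ S
      · rw [fromMono_mem hn S (toMono hn S f) hx hS]
        apply Fin.ext
        rw [castEmb_val]
        set idx := (S.orderIsoOfFin rfl).symm ⟨px, hS⟩ with hidx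
        have hemb : S.orderEmbOfFin rfl idx = px := ordEmb_symm S ⟨px, hS⟩
        have hfx : (f x : ℕ) < n - 1 := by
          have : px ∈ Finset.univ.filter
              (fun p : Fin (n - 1) => (f (castEmb p) : ℕ) < n - 1) := by
            rw [hsigma]; exact hS
          rw [Finset.mem_filter] at this
          rw [← hcx]
          exact this.2
        rw [toMono_val hn S f idx (by rw [hemb, hcx]; exact hfx), hemb, hcx]
      · have hfx : ¬ (f x : ℕ) < n - 1 := by
          intro hc
          apply hS
          have : px ∈ Finset.univ.filter
              (fun p : Fin (n - 1) => (f (castEmb p) : ℕ) < n - 1) := by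
            rw [Finset.mem_filter]
            refine ⟨Finset.mem_univ _, ?_⟩
            rw [hcx]
            exact hc
          rw [hsigma] at this
          exact this
        rw [fromMono_notmem hn S (toMono hn S f) hx hS]
        have := val_lt_last (f x)
        exact (Fin.ext (by simp only [Fin.val_mk]; omega) : (⟨n - 1, by omega⟩ : Fin n) = f x)
    · rw [fromMono_top hn S (toMono hn S f) (by omega)]
      have hxe : x = (⟨n - 1, by omega⟩ : Fin n) := by
        have := val_lt_last x
        exact Fin.ext (by simp only [Fin.val_mk]; omega)
      conv_rhs => rw [hxe]
      exact (hpm.1 _ rfl).symm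
  case right =>
    intro g hg
    beta_reduce
    funext idx
    apply Fin.ext
    set p : Fin (n - 1) := S.orderEmbOfFin rfl idx with hp
    have hpS : p ∈ S := Finset.orderEmbOfFin_mem S rfl idx
    have hpx : ((castEmb p : Fin n) : ℕ) < n - 1 := by
      have := p.isLt; simp only [castEmb_val]; omega
    have hc2 : (⟨((castEmb p : Fin n) : ℕ), hpx⟩ : Fin (n - 1)) ∈ S := by
      rw [castEmb_back]; exact hpS
    have hsymm : (S.orderIsoOfFin rfl).symm ⟨⟨((castEmb p : Fin n) : ℕ), hpx⟩, hc2⟩ = idx := by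
      rw [OrderIso.symm_apply_eq]
      apply Subtype.ext
      rw [Finset.coe_orderIsoOfFin_apply]
      exact castEmb_back p hpx
    have hval : (fromMono hn S g (castEmb p) : ℕ) = (g idx : ℕ) := by
      rw [fromMono_mem hn S g hpx hc2, castEmb_val, hsymm]
    rw [toMono_val hn S (fromMono hn S g) idx (by rw [← hp, hval]; exact (g idx).isLt)]
    rw [← hp, hval]
  case hi =>
    intro f hf
    beta_reduce
    have hf1 := Finset.mem_filter.mp hf
    have hpm : PartiallyMonotonic f := (Finset.mem_filter.mp hf1.1).2
    have hsigma := hf1.2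
    refine Finset.mem_filter.mpr ⟨Finset.mem_univ _, ?_⟩
    intro a b hab
    set pa : Fin (n - 1) := S.orderEmbOfFin rfl a with hpa
    set pb : Fin (n - 1) := S.orderEmbOfFin rfl b with hpb
    have hpaS : pa ∈ S := Finset.orderEmbOfFin_mem S rfl a
    have hpbS : pb ∈ S := Finset.orderEmbOfFin_mem S rfl b
    have hfa : (f (castEmb pa) : ℕ) < n - 1 := by
      have : pa ∈ Finset.univ.filter
          (fun p : Fin (n - 1) => (f (castEmb p) : ℕ) < n - 1) := by
        rw [hsigma]; exact hpaS
      exact (Finset.mem_filter.mp this).2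
    have hfb : (f (castEmb pb) : ℕ) < n - 1 := by
      have : pb ∈ Finset.univ.filter
          (fun p : Fin (n - 1) => (f (castEmb p) : ℕ) < n - 1) := by
        rw [hsigma]; exact hpbS
      exact (Finset.mem_filter.mp this).2
    rw [val_le_iff, toMono_val hn S f a hfa, toMono_val hn S f b hfb]
    have hple : castEmb pa ≤ (castEmb pb : Fin n) := by
      rw [val_le_iff, castEmb_val, castEmb_val, ← val_le_iff]
      exact (S.orderEmbOfFin rfl).monotone hab
    have h1 : ((castEmb pa : Fin n) : ℕ) < n - 1 := by
      have := pa.isLt; simp only [castEmb_val]; omega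
    have h2 : ((castEmb pb : Fin n) : ℕ) < n - 1 := by
      have := pb.isLt; simp only [castEmb_val]; omega
    exact hpm.2 _ _ hple h1 h2 hfa hfb

lemma count_pm (hn : 2 ≤ n) :
    Set.ncard {f : Function.End (Fin n) | PartiallyMonotonic f} =
      ∑ k ∈ Finset.range n, Nat.choose (n - 1) k * Nat.choose (n + k - 2) k := by
  classical
  show Set.ncard {f : Fin n → Fin n | PartiallyMonotonic f} = _
  have hset : {f : Fin n → Fin n | PartiallyMonotonic f} =
      ↑(Finset.univ.filter (fun f : Fin n → Fin n => PartiallyMonotonic f)) := by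
    ext f
    simp only [Set.mem_setOf_eq, Finset.coe_filter, Finset.mem_univ, true_and]
  rw [hset, Set.ncard_coe_finset]
  rw [Finset.card_eq_sum_card_fiberwise
    (f := fun f : Fin n → Fin n =>
      Finset.univ.filter (fun p : Fin (n - 1) => (f (castEmb p) : ℕ) < n - 1))
    (t := (Finset.univ : Finset (Finset (Fin (n - 1)))))
    (fun x _ => Finset.mem_univ _)]
  rw [Finset.sum_congr rfl (fun S _ => fiber_card hn S)]
  rw [← Finset.powerset_univ]
  rw [Finset.sum_powerset_apply_card (fun k => ((n - 1) + k - 1).choose k)]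
  rw [Finset.card_univ, Fintype.card_fin]
  have hr : (n - 1) + 1 = n := by omega
  rw [hr]
  refine Finset.sum_congr rfl fun k _ => ?_
  rw [smul_eq_mul]
  have : (n - 1) + k - 1 = n + k - 2 := by omega
  rw [this]

lemma count_total (hn : 2 ≤ n) :
    Set.ncard (NearlyMonotonicSet n) =
      (∑ k ∈ Finset.range n, Nat.choose (n - 1) k * Nat.choose (n + k - 2) k) + n - 1 := by
  classical
  haveI : Fintype (Function.End (Fin n)) := Pi.instFintype
  haveI : Finite (Function.End (Fin n)) := Finite.of_fintype _
  set C : Set (Function.End (Fin n)) := {f | ∃ c : Fin n, f = fun _ => c} with hC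
  have hCcard : C.ncard = n := by
    have hCr : C = Set.range (fun c : Fin n => constE c) := by
      ext f
      constructor
      · rintro ⟨c, rfl⟩; exact ⟨c, rfl⟩
      · rintro ⟨c, rfl⟩; exact ⟨c, rfl⟩
    have hinj : Function.Injective (fun c : Fin n => constE c) :=
      fun c1 c2 hcc => congrFun hcc ⟨0, by omega⟩
    rw [hCr, ← Set.image_univ, Set.ncard_image_of_injective _ hinj, Set.ncard_univ,
      Nat.card_eq_fintype_card, Fintype.card_fin]
  have hint : {f : Function.End (Fin n) | PartiallyMonotonic f} ∩ C =
      {constE (⟨n - 1, by omega⟩ : Fin n)} := by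
    ext f
    constructor
    · rintro ⟨hpm, c, rfl⟩
      have := hpm.1 (⟨n - 1, by omega⟩ : Fin n) rfl
      refine Set.mem_singleton_iff.mpr ?_
      funext x
      exact this
    · rintro rfl
      constructor
      · constructor
        · intro q hq
          have : q = (⟨n - 1, by omega⟩ : Fin n) := Fin.ext (by simp only [Fin.val_mk]; omega)
          rw [this]
          rfl
        · intro p q hpq hp hq hfp hfq
          exfalso
          have : ((constE (⟨n - 1, by omega⟩ : Fin n) p : Fin n) : ℕ) = n - 1 := rfl
          omega
      · exact ⟨⟨n - 1, by omega⟩, rfl⟩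
  have key := Set.ncard_inter_add_ncard_union
    {f : Function.End (Fin n) | PartiallyMonotonic f} C (Set.toFinite _) (Set.toFinite _)
  rw [hint, Set.ncard_singleton, count_pm hn, hCcard] at key
  have : NearlyMonotonicSet n = {f : Function.End (Fin n) | PartiallyMonotonic f} ∪ C := rfl
  rw [this]
  omega

end S6

/-- For every `n ≥ 2`, the submonoid of transformations of `Q_n = {0,…,n−1}`
generated by the unitary transformations `(q→q+1)` and `(q+1→q)` for `0 ≤ q ≤ n−3`,
the unitary transformations `(q→n−1)` for `0 ≤ q ≤ n−2`, the constant transformation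
to `0`, and the identity, equals the set of nearly monotonic transformations of `Q_n`;
moreover this set has cardinality `e(n) + n − 1` where
`e(n) = Σ_{k=0}^{n−1} C(n−1, k)·C(n+k−2, k)`. -/
theorem statement6 (n : ℕ) (hn : 2 ≤ n) :
    (Submonoid.closure
        ({f : Function.End (Fin n) |
            ∃ p q : Fin n, (q : ℕ) = (p : ℕ) + 1 ∧ (q : ℕ) < n - 1 ∧
              (f = unitaryT p q ∨ f = unitaryT q p)} ∪
         {f : Function.End (Fin n) |
            ∃ p r : Fin n, (p : ℕ) < n - 1 ∧ (r : ℕ) = n - 1 ∧ f = unitaryT p r} ∪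
         {fun _ => (⟨0, by omega⟩ : Fin n)}) :
        Set (Function.End (Fin n)))
      = NearlyMonotonicSet n ∧
    Set.ncard (NearlyMonotonicSet n) =
      (∑ k ∈ Finset.range n, Nat.choose (n - 1) k * Nat.choose (n + k - 2) k) + n - 1 := by
  exact ⟨S6.closure_eq_nm hn, S6.count_total hn⟩
end

section
/- For every n ≥ 1, the submonoid of the monoid of transformations of Q_n = {0,…,n−1} generated by the unitary transformations (q→p) for all 0 ≤ q < p ≤ n−1, together with the identity, is equal to the set of all non-decreasing transformations of Q_n, i.e., all t with q ≤ t(q) for every q ∈ Q_n; moreover this set has cardinality n!. -/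
open Classical in
lemma aux_mem_closure (n : ℕ) : ∀ (k : ℕ) (f : Function.End (Fin n)),
    (Finset.univ.filter fun x => f x ≠ x).card ≤ k → (∀ q, q ≤ f q) →
    f ∈ Submonoid.closure
      {f : Function.End (Fin n) | ∃ q p : Fin n, q < p ∧ f = unitaryT q p} := by
  intro k
  induction k with
  | zero =>
    intro f hc hf
    have hfix : ∀ x, f x = x := by
      intro x
      by_contra h
      have hx : x ∈ Finset.univ.filter fun x => f x ≠ x := by simp [h]
      have := Finset.card_pos.mpr ⟨x, hx⟩
      omega
    have hfid : f = 1 := funext hfix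
    exact hfid ▸ one_mem _
  | succ k ih =>
    intro f hc hf
    by_cases h : f = 1
    · exact h ▸ one_mem _
    have hne : (Finset.univ.filter fun x => f x ≠ x).Nonempty := by
      by_contra hne
      apply h
      have : ∀ x, f x = x := by
        intro x
        by_contra hx
        exact hne ⟨x, by simp [hx]⟩
      exact funext this
    set T := Finset.univ.filter fun x => f x ≠ x with hT
    set q := T.min' hne with hq
    have hqT : q ∈ T := Finset.min'_mem _ _
    have hfq : f q ≠ q := by simpa [hT] using hqT
    have hqlt : q < f q := lt_of_le_of_ne (hf q) (Ne.symm hfq)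
    set g : Function.End (Fin n) := fun x => if x = q then q else f x with hg
    have hgle : ∀ x, x ≤ g x := by
      intro x
      by_cases hx : x = q <;> simp [hg, hx, hf x]
    have hcard : (Finset.univ.filter fun x => g x ≠ x).card ≤ k := by
      have hsub : (Finset.univ.filter fun x => g x ≠ x) ⊆ T.erase q := by
        intro x hx
        simp only [Finset.mem_filter, Finset.mem_univ, true_and] at hx
        have hxq : x ≠ q := by
          intro hxx; apply hx; simp [hg, hxx]
        refine Finset.mem_erase.mpr ⟨hxq, ?_⟩
        simp only [hT, Finset.mem_filter, Finset.mem_univ, true_and]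
        intro hfx; apply hx; simp [hg, hxq, hfx]
      calc (Finset.univ.filter fun x => g x ≠ x).card ≤ (T.erase q).card :=
            Finset.card_le_card hsub
        _ = T.card - 1 := Finset.card_erase_of_mem hqT
        _ ≤ k := by omega
    have hgmem := ih g (by convert hcard) hgle
    have hdec : f = unitaryT q (f q) * g := by
      funext x
      show f x = unitaryT q (f q) (g x)
      by_cases hx : x = q
      · subst hx; simp [hg, unitaryT]
      · have hgx : g x = f x := by simp [hg, hx]
        rw [hgx]
        have hfx : f x ≠ q := by
          rcases lt_or_ge x q with hlt | hle
          · have : x ∉ T := fun hxT => absurd (Finset.min'_le _ _ hxT) (not_le.mpr hlt)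
            have : f x = x := by simpa [hT] using this
            rw [this]; exact hx
          · have hxq : q < x := lt_of_le_of_ne hle (Ne.symm hx)
            exact ne_of_gt (lt_of_lt_of_le hxq (hf x))
        simp [unitaryT, hfx]
    rw [hdec]
    exact mul_mem (Submonoid.subset_closure ⟨q, f q, hqlt, rfl⟩) hgmem

lemma aux_prod (n : ℕ) : ∏ q : Fin n, (n - (q : ℕ)) = Nat.factorial n := by
  have h3 : ∏ q : Fin n, (n - (q : ℕ)) = ∏ i ∈ Finset.range n, (n - i) :=
    Fin.prod_univ_eq_prod_range (fun i => n - i) n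
  have h4 : ∏ i ∈ Finset.range n, (n - (n - 1 - i)) = ∏ i ∈ Finset.range n, (n - i) :=
    Finset.prod_range_reflect (fun i => n - i) n
  have h5 : ∏ i ∈ Finset.range n, (n - (n - 1 - i)) = ∏ i ∈ Finset.range n, (i + 1) := by
    apply Finset.prod_congr rfl
    intro i hi
    simp only [Finset.mem_range] at hi
    omega
  rw [h3, ← h4, h5]
  exact Finset.prod_range_add_one_eq_factorial n

def auxM (n : ℕ) : Submonoid (Function.End (Fin n)) :=
  { carrier := {f : Function.End (Fin n) | ∀ q : Fin n, q ≤ f q},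
    one_mem' := fun q => le_refl q,
    mul_mem' := fun {f g} hf hg r => le_trans (hg r) (hf (g r)) }

/-- For every `n ≥ 1`, the submonoid of transformations of `Q_n = {0,…,n−1}`
generated by the unitary transformations `(q→p)` for `0 ≤ q < p ≤ n−1`, together
with the identity, equals the set of all non-decreasing transformations of `Q_n`;
moreover this set has cardinality `n!`. -/
theorem statement7 (n : ℕ) (hn : 1 ≤ n) :
    (Submonoid.closure
        {f : Function.End (Fin n) | ∃ q p : Fin n, q < p ∧ f = unitaryT q p} :
        Set (Function.End (Fin n)))
      = {f : Function.End (Fin n) | ∀ q : Fin n, q ≤ f q} ∧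
    Set.ncard {f : Function.End (Fin n) | ∀ q : Fin n, q ≤ f q} = Nat.factorial n := by
  constructor
  · apply le_antisymm
    · have hle : Submonoid.closure
          {f : Function.End (Fin n) | ∃ q p : Fin n, q < p ∧ f = unitaryT q p} ≤ auxM n := by
        rw [Submonoid.closure_le]
        rintro f ⟨q, p, hqp, rfl⟩
        show ∀ r, r ≤ unitaryT q p r
        intro r
        by_cases hr : r = q
        · subst hr; simpa [unitaryT] using hqp.le
        · simp [unitaryT, hr]
      intro f hf
      exact hle hf
    · intro f hf
      exact aux_mem_closure n _ f le_rfl hf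
  · have e : ↥{f : Function.End (Fin n) | ∀ q : Fin n, q ≤ f q} ≃
        ∀ q : Fin n, {p : Fin n // q ≤ p} := Equiv.subtypePiEquivPi
    rw [← Nat.card_coe_set_eq]
    have h1 : Nat.card {f : Function.End (Fin n) | ∀ q : Fin n, q ≤ f q} =
        ∏ q : Fin n, Nat.card {p : Fin n // q ≤ p} := by
      rw [Nat.card_congr e, Nat.card_pi]
    rw [h1]
    have hcard : ∀ q : Fin n, Nat.card {p : Fin n // q ≤ p} = n - q := by
      intro q
      rw [Nat.card_eq_fintype_card]
      have h2 : Fintype.card {p : Fin n // q ≤ p} = Fintype.card (Set.Ici q) :=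
        Fintype.card_congr (Equiv.refl _)
      rw [h2, ← Set.toFinset_card, Set.toFinset_Ici, Fin.card_Ici]
    simp only [hcard]
    exact aux_prod n
end

section
/- Let Q be a finite set and T a set of unitary transformations of Q. If T contains a k-cyclic subset with k ≥ 3, i.e., a subset {(q0→q1), (q1→q2), …, (q_{k−2}→q_{k−1}), (q_{k−1}→q0)} for pairwise distinct elements q0,…,q_{k−1} of Q, then the subsemigroup of transformations generated by T under composition is not aperiodic: it contains an element s such that s^(j+1) ≠ s^j for every j ≥ 1. -/
lemma list_prod_mem_closure {M : Type*} [Monoid M] {T : Set M} :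
    ∀ l : List M, l ≠ [] → (∀ x ∈ l, x ∈ T) → l.prod ∈ Subsemigroup.closure T := by
  intro l
  induction l with
  | nil => simp
  | cons a rest ih =>
    intro _ hmem
    rcases eq_or_ne rest [] with h | h
    · subst h; simpa using Subsemigroup.subset_closure (hmem a (by simp))
    · rw [List.prod_cons]
      exact mul_mem (Subsemigroup.subset_closure (hmem a (by simp)))
        (ih h fun x hx => hmem x (List.mem_cons_of_mem _ hx))

/-- If a set `T` of unitary transformations of a finite set `Q` contains a `k`-cyclic
subset `{(q0→q1), (q1→q2), …, (q_{k−1}→q0)}` with `k ≥ 3` (the `q_i` pairwise distinct),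
then the subsemigroup generated by `T` is not aperiodic: it contains an element `s`
with `s^(j+1) ≠ s^j` for every `j ≥ 1`. -/
theorem statement8 {Q : Type*} [Finite Q] [DecidableEq Q] (T : Set (Function.End Q))
    (hT : ∀ t ∈ T, ∃ p q : Q, p ≠ q ∧ t = unitaryT p q)
    (k : ℕ) (hk : 3 ≤ k) (q : Fin k → Q) (hq : Function.Injective q)
    (hcyc : ∀ i : Fin k, unitaryT (q i) (q (i + ⟨1, by omega⟩)) ∈ T) :
    ∃ s ∈ Subsemigroup.closure T, ∀ j : ℕ, 1 ≤ j → s ^ (j + 1) ≠ s ^ j := by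
  have hk0 : 0 < k := by omega
  have h1k : (1 : ℕ) < k := by omega
  have finext : ∀ (a b : ℕ) (ha : a < k) (hb : b < k), a = b →
      (⟨a, ha⟩ : Fin k) = ⟨b, hb⟩ := fun a b _ _ h => Fin.ext h
  set t : Fin k → Function.End Q := fun i => unitaryT (q i) (q (i + ⟨1, h1k⟩)) with ht
  have htT : ∀ i, t i ∈ T := fun i => hcyc i
  set F : ℕ → Function.End Q := fun n => (((List.finRange k).drop n).map t).prod with hFdef
  have hstep : ∀ n (h : n < k), F n = t ⟨n, h⟩ * F (n+1) := by
    intro n h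
    simp only [hFdef]
    rw [List.drop_eq_getElem_cons (by simpa using h)]
    simp [List.getElem_finRange]
  have hteval : ∀ (m j : Fin k), t m (q j) =
      if j = m then q (m + ⟨1, h1k⟩) else q j := by
    intro m j
    simp only [ht, unitaryT, hq.eq_iff]
  have hmul : ∀ (a b : Function.End Q) (x : Q), (a * b) x = a (b x) := fun _ _ _ => rfl
  have hFval : ∀ d n, n + d = k → ∀ i : Fin k,
      F n (q i) = q (if i.val < n then i
        else if h : i.val + 1 < k then ⟨i.val+1, h⟩
        else if n = 0 then ⟨1, h1k⟩ else ⟨0, hk0⟩) := by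
    intro d
    induction d with
    | zero =>
      intro n hn i
      have hFk : F n = 1 := by
        simp only [hFdef]
        rw [List.drop_eq_nil_of_le (by simp; omega)]
        rfl
      rw [hFk]
      have : i.val < n := by omega
      simp [this]
      rfl
    | succ d ih =>
      intro n hn i
      have hnk : n < k := by omega
      rw [hstep n hnk, hmul, ih (n+1) (by omega) i, hteval]
      have hval1 : ((⟨n, hnk⟩ : Fin k) + ⟨1, h1k⟩).val = (n + 1) % k := by
        simp [Fin.add_def]
      by_cases h1 : i.val < n
      · have : i.val < n + 1 := by omega
        simp only [if_pos this, if_pos h1]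
        rw [if_neg]
        intro he
        rw [he] at h1; simp at h1
      · by_cases h2 : i.val = n
        · have : i.val < n + 1 := by omega
          simp only [if_pos this, if_neg h1]
          rw [if_pos (Fin.ext h2)]
          by_cases h3 : i.val + 1 < k
          · rw [dif_pos h3]
            refine congrArg q (Fin.ext ?_)
            rw [hval1, Nat.mod_eq_of_lt (by omega)]
            simp only [Fin.val_mk]
            omega
          · rw [dif_neg h3, if_neg (by omega)]
            refine congrArg q (Fin.ext ?_)
            rw [hval1]
            have hnn : n + 1 = k := by omega
            simp [hnn]
        · have h1' : ¬ i.val < n + 1 := by omega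
          simp only [if_neg h1, if_neg h1']
          by_cases h3 : i.val + 1 < k
          · rw [dif_pos h3, dif_pos h3]
            rw [if_neg]
            intro he
            have := congrArg Fin.val he
            simp only [Fin.val_mk] at this
            omega
          · rw [dif_neg h3, dif_neg h3]
            rw [if_neg (by omega : ¬ n + 1 = 0)]
            by_cases h5 : n = 0
            · subst h5
              rw [if_pos rfl, if_pos rfl]
              refine congrArg q (Fin.ext ?_)
              rw [hval1, Nat.mod_eq_of_lt (by omega)]
            · rw [if_neg h5, if_neg]
              intro he
              have := congrArg Fin.val he
              simp only [Fin.val_mk] at this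
              omega
  set s : Function.End Q := F 0 with hs
  have hseval : ∀ i : Fin k, s (q i) =
      q (if h : i.val + 1 < k then ⟨i.val+1, h⟩ else ⟨1, h1k⟩) := by
    intro i
    rw [hs, hFval k 0 (by omega) i]
    simp
  refine ⟨s, ?_, ?_⟩
  · apply list_prod_mem_closure
    · simp only [ne_eq, List.map_eq_nil_iff]
      intro he
      have := congrArg List.length he
      simp at this
      omega
    · intro x hx
      simp only [List.mem_map] at hx
      obtain ⟨i, _, rfl⟩ := hx
      exact htT i
  · have hm : 0 < k - 1 := by omega
    have hmodlt : ∀ j : ℕ, j % (k-1) < k - 1 := fun j => Nat.mod_lt j hm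
    have hsucc : ∀ j : ℕ, (j+1) % (k-1) =
        if j % (k-1) + 1 < k - 1 then j % (k-1) + 1 else 0 := by
      intro j
      have h1m : 1 % (k-1) = 1 := Nat.mod_eq_of_lt (by omega)
      rw [Nat.add_mod, h1m]
      by_cases hc : j % (k-1) + 1 < k - 1
      · rw [if_pos hc, Nat.mod_eq_of_lt hc]
      · rw [if_neg hc, show j % (k-1) + 1 = k - 1 by have := hmodlt j; omega,
          Nat.mod_self]
    have hpow : ∀ j : ℕ, (s ^ (j+1)) (q ⟨0, hk0⟩) =
        q ⟨j % (k-1) + 1, by have := hmodlt j; omega⟩ := by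
      intro j
      induction j with
      | zero =>
        rw [pow_one, hseval]
        rw [dif_pos (show (0:ℕ) + 1 < k by omega)]
        exact congrArg q (Fin.ext (by simp [Nat.zero_mod]))
      | succ j ih =>
        rw [pow_succ', hmul, ih, hseval]
        have halt := hmodlt j
        by_cases hc : j % (k-1) + 1 < k - 1
        · rw [dif_pos (show j % (k-1) + 1 + 1 < k by omega)]
          refine congrArg q (Fin.ext ?_)
          simp only [Fin.val_mk]
          rw [hsucc j, if_pos hc]
        · rw [dif_neg (show ¬ (j % (k-1) + 1 + 1 < k) by omega)]
          refine congrArg q (Fin.ext ?_)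
          simp only [Fin.val_mk]
          rw [hsucc j, if_neg hc]
    intro j hj h
    obtain ⟨i, rfl⟩ : ∃ i, j = i + 1 := ⟨j - 1, by omega⟩
    have h2 := hpow (i+1)
    rw [h, hpow i] at h2
    have hv := congrArg Fin.val (hq h2)
    simp only [Fin.val_mk] at hv
    have halt := hmodlt i
    rw [hsucc i] at hv
    by_cases hc : i % (k-1) + 1 < k - 1
    · rw [if_pos hc] at hv; omega
    · rw [if_neg hc] at hv; omega
end

section
/- Let Q be a finite set and T a set of unitary transformations of Q. If there exist pairwise distinct elements q0, q1, q2, q3 of Q such that T contains the six unitary transformations (q0→q1), (q1→q0), (q1→q2), (q1→q3), (q2→q1), (q3→q1), then the subsemigroup generated by T under composition is not aperiodic: it contains an element s such that s^(j+1) ≠ s^j for every j ≥ 1. -/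
/-- If a set `T` of unitary transformations of a finite set `Q` contains the six
transformations `(q0→q1), (q1→q0), (q1→q2), (q1→q3), (q2→q1), (q3→q1)` for pairwise
distinct `q0, q1, q2, q3`, then the subsemigroup generated by `T` is not aperiodic:
it contains an element `s` with `s^(j+1) ≠ s^j` for every `j ≥ 1`. -/
theorem statement9 {Q : Type*} [Finite Q] [DecidableEq Q] (T : Set (Function.End Q))
    (hT : ∀ t ∈ T, ∃ p q : Q, p ≠ q ∧ t = unitaryT p q)
    (q0 q1 q2 q3 : Q)
    (h01 : q0 ≠ q1) (h02 : q0 ≠ q2) (h03 : q0 ≠ q3)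
    (h12 : q1 ≠ q2) (h13 : q1 ≠ q3) (h23 : q2 ≠ q3)
    (m01 : unitaryT q0 q1 ∈ T) (m10 : unitaryT q1 q0 ∈ T)
    (m12 : unitaryT q1 q2 ∈ T) (m13 : unitaryT q1 q3 ∈ T)
    (m21 : unitaryT q2 q1 ∈ T) (m31 : unitaryT q3 q1 ∈ T) :
    ∃ s ∈ Subsemigroup.closure T, ∀ j : ℕ, 1 ≤ j → s ^ (j + 1) ≠ s ^ j := by
  set s : Function.End Q :=
    unitaryT q1 q0 * unitaryT q3 q1 * unitaryT q1 q2 * unitaryT q0 q1 *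
      unitaryT q1 q3 * unitaryT q2 q1 with hs
  have hmem : s ∈ Subsemigroup.closure T := by
    apply mul_mem; apply mul_mem; apply mul_mem; apply mul_mem; apply mul_mem
    all_goals exact Subsemigroup.subset_closure ‹_›
  have hmul : ∀ (f g : Function.End Q) (x : Q), (f * g) x = f (g x) := fun _ _ _ => rfl
  have hs0 : s q0 = q2 := by
    simp [hs, hmul, unitaryT, h01, h02, h03, h12, h13, h23,
      h01.symm, h02.symm, h03.symm, h12.symm, h13.symm, h23.symm]
  have hs2 : s q2 = q0 := by
    simp [hs, hmul, unitaryT, h01, h02, h03, h12, h13, h23,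
      h01.symm, h02.symm, h03.symm, h12.symm, h13.symm, h23.symm]
  have step : ∀ m : ℕ, (s ^ (m + 1)) q0 = s ((s ^ m) q0) := by
    intro m; rw [pow_succ']; exact hmul s (s ^ m) q0
  have hor : ∀ n : ℕ, (s ^ n) q0 = q0 ∨ (s ^ n) q0 = q2 := by
    intro n
    induction n with
    | zero => left; rfl
    | succ n ih =>
      rw [step]
      rcases ih with h | h
      · right; rw [h, hs0]
      · left; rw [h, hs2]
  refine ⟨s, hmem, fun j _ h => ?_⟩
  have hq := congrFun h q0
  rcases hor j with h' | h'
  · rw [step, h', hs0] at hq; exact h02 hq.symm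
  · rw [step, h', hs2] at hq; exact h02 hq
end

section
/- Let n ≥ 2 be even and consider the composition (2, 2, …, 2) of n into n/2 parts. The submonoid of the monoid of transformations of Q_n = {0,…,n−1} generated by all Type 1 and Type 2 transformations of this composition, together with the identity, is aperiodic and has cardinality exactly n!·(n+1)! / (2^n · ((n/2)!)^2). In particular, the size of the maximal aperiodic unitary semigroup on n states is at least n!·(n+1)! / (2^n · ((n/2)!)^2). -/
/-- `x` lies in the `i`-th block `Q_i = {r_i, …, r_i + n_i − 1}` of the composition
given by the list `L = [n1, …, nm]`, where `r_i = n1 + ⋯ + n_{i−1}`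
(blocks are indexed from `0` here). -/
def InBlock (L : List ℕ) (i : ℕ) {n : ℕ} (x : Fin n) : Prop :=
  (L.take i).sum ≤ (x : ℕ) ∧ (x : ℕ) < (L.take (i + 1)).sum

/-- Type 1 transformations: the unitary transformations `(q→q+1)` and `(q+1→q)` for
`q, q+1` lying in the same block. -/
def Type1 (L : List ℕ) (n : ℕ) : Set (Function.End (Fin n)) :=
  {f | ∃ (i : ℕ) (p q : Fin n), (q : ℕ) = (p : ℕ) + 1 ∧ InBlock L i p ∧ InBlock L i q ∧
      (f = unitaryT p q ∨ f = unitaryT q p)}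

/-- Type 2 transformations: the unitary transformations `(q→p)` with `q ∈ Q_i`,
`p ∈ Q_j` and `i < j`. -/
def Type2 (L : List ℕ) (n : ℕ) : Set (Function.End (Fin n)) :=
  {f | ∃ (i j : ℕ) (q p : Fin n), i < j ∧ InBlock L i q ∧ InBlock L j p ∧ f = unitaryT q p}

namespace St13

variable {n : ℕ}

/-- block-monotone -/
def BMono (n : ℕ) (f : Function.End (Fin n)) : Prop :=
  ∀ x : Fin n, (x : ℕ) / 2 ≤ ((f x : Fin n) : ℕ) / 2

/-- never swaps a block -/
def NoSwap (n : ℕ) (f : Function.End (Fin n)) : Prop :=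
  ∀ x y : Fin n, Even (x : ℕ) → (y : ℕ) = (x : ℕ) + 1 → ¬(f x = y ∧ f y = x)

def Good (n : ℕ) (f : Function.End (Fin n)) : Prop := BMono n f ∧ NoSwap n f

lemma mul_apply (f g : Function.End (Fin n)) (x : Fin n) : (f * g) x = f (g x) := rfl

lemma good_one : Good n 1 := by
  constructor
  · intro x; exact le_rfl
  · intro x y hx hy ⟨h1, h2⟩
    have : (x : ℕ) = y := by rw [← h2]; rfl
    omega

lemma good_mul {f g : Function.End (Fin n)} (hf : Good n f) (hg : Good n g) :
    Good n (f * g) := by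
  obtain ⟨fb, fs⟩ := hf
  obtain ⟨gb, gs⟩ := hg
  refine ⟨fun x => le_trans (gb x) (fb (g x)), ?_⟩
  intro x y hx hy ⟨h1, h2⟩
  rw [mul_apply] at h1 h2
  have hgx : g x = x ∨ g x = y := by
    have b1 := gb x
    have b2 := fb (g x)
    rw [h1] at b2
    rcases Nat.even_iff.1 hx with hx2
    have : ((g x : Fin n) : ℕ) = (x : ℕ) ∨ ((g x : Fin n) : ℕ) = (y : ℕ) := by omega
    rcases this with h | h
    · exact Or.inl (Fin.ext h)
    · exact Or.inr (Fin.ext h)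
  have hgy : g y = x ∨ g y = y := by
    have b1 := gb y
    have b2 := fb (g y)
    rw [h2] at b2
    rcases Nat.even_iff.1 hx with hx2
    have : ((g y : Fin n) : ℕ) = (x : ℕ) ∨ ((g y : Fin n) : ℕ) = (y : ℕ) := by omega
    rcases this with h | h
    · exact Or.inl (Fin.ext h)
    · exact Or.inr (Fin.ext h)
  have hxy : x ≠ y := by intro h; rw [h] at hy; omega
  rcases hgx with h | h
  · rw [h] at h1
    rcases hgy with h' | h'
    · rw [h'] at h2; rw [h1] at h2; exact hxy h2.symm
    · rw [h'] at h2; exact fs x y hx hy ⟨h1, h2⟩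
  · rw [h] at h1
    rcases hgy with h' | h'
    · exact gs x y hx hy ⟨h, h'⟩
    · rw [h'] at h2; exact hxy (h2.symm.trans h1)

/-- the measure used for aperiodicity -/
def mes (m : ℕ) (f : Function.End (Fin n)) (x : Fin n) : ℕ :=
  (m - (x : ℕ) / 2) + (m - ((f x : Fin n) : ℕ) / 2) + (if f x = x then 0 else 1)

lemma mes_decr {m : ℕ} (hm : n = 2 * m) {f : Function.End (Fin n)} (hf : Good n f)
    (x : Fin n) (hx : f x ≠ x) : mes m f (f x) < mes m f x := by
  obtain ⟨fb, fs⟩ := hf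
  have bx := (x : Fin n).isLt
  have b1 := fb x
  have b2 := fb (f x)
  have hlt : ((f (f x) : Fin n) : ℕ) / 2 = (x : ℕ) / 2 ∨ (x : ℕ) / 2 < ((f (f x) : Fin n) : ℕ) / 2 := by omega
  rcases hlt with hc | hc
  · -- all in the same block
    have hb : ((f x : Fin n) : ℕ) / 2 = (x : ℕ) / 2 := by omega
    have hvx : ((f x : Fin n) : ℕ) ≠ (x : ℕ) := fun h => hx (Fin.ext h)
    have hff : f (f x) = f x := by
      by_contra hne
      have hvff : ((f (f x) : Fin n) : ℕ) ≠ ((f x : Fin n) : ℕ) := fun h => hne (Fin.ext h)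
      have hffx : f (f x) = x := by
        apply Fin.ext; omega
      -- f swaps the block {x, f x} : contradiction with NoSwap
      rcases Nat.even_or_odd (x : ℕ) with he | ho
      · have hy : ((f x : Fin n) : ℕ) = (x : ℕ) + 1 := by
          rcases Nat.even_iff.1 he with h2; omega
        exact fs x (f x) he hy ⟨rfl, hffx⟩
      · have hy : (x : ℕ) = ((f x : Fin n) : ℕ) + 1 := by
          rcases Nat.odd_iff.1 ho with h2; omega
        exact fs (f x) x (by rw [Nat.even_iff]; omega) hy ⟨hffx, rfl⟩
    simp only [mes, if_pos hff, if_neg hx]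
    have hval : ((f (f x) : Fin n) : ℕ) = ((f x : Fin n) : ℕ) := by rw [hff]
    have hxm : (x : ℕ) / 2 < m := by omega
    omega
  · -- strictly increasing block for f (f x)
    simp only [mes]
    have hxm : (x : ℕ) / 2 < m := by omega
    have h1 : m - ((f (f x) : Fin n) : ℕ) / 2 < m - (x : ℕ) / 2 := by omega
    have e1 : (if f (f x) = f x then 0 else 1) ≤ 1 := by split <;> omega
    have e2 : (if f x = x then 0 else 1) = 1 := if_neg hx
    omega

lemma pow_apply_succ (f : Function.End (Fin n)) (k : ℕ) (x : Fin n) :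
    (f ^ (k + 1)) x = (f ^ k) (f x) := by
  rw [pow_succ]; rfl

lemma pow_fix (f : Function.End (Fin n)) {x : Fin n} (h : f x = x) (k : ℕ) :
    (f ^ k) x = x := by
  induction k with
  | zero => rfl
  | succ k ih => rw [pow_apply_succ, h, ih]

lemma descent {m : ℕ} (hm : n = 2 * m) {f : Function.End (Fin n)} (hf : Good n f) :
    ∀ j (x : Fin n), mes m f x ≤ j → (f ^ (j + 1)) x = (f ^ j) x := by
  intro j
  induction j with
  | zero =>
    intro x h
    have hfx : f x = x := by
      by_contra hne
      have := mes_decr hm hf x hne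
      omega
    rw [pow_fix f hfx, pow_fix f hfx]
  | succ j ih =>
    intro x h
    by_cases hfx : f x = x
    · rw [pow_fix f hfx, pow_fix f hfx]
    · have hd := mes_decr hm hf x hfx
      have := ih (f x) (by omega)
      rw [pow_apply_succ f (j+1) x, pow_apply_succ f j x]
      exact this

lemma good_aperiodic {m : ℕ} (hm : n = 2 * m) {f : Function.End (Fin n)} (hf : Good n f) :
    f ^ (n + 2) = f ^ (n + 1) := by
  funext x
  apply descent hm hf (n + 1) x
  simp only [mes]
  have : (if f x = x then 0 else 1) ≤ 1 := by split <;> omega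
  omega

/-! ### blocks for the all-2s composition -/

lemma inBlock_iff {m : ℕ} (hm : n = 2 * m) (i : ℕ) (x : Fin n) :
    InBlock (List.replicate m 2) i x ↔ 2 * i ≤ (x : ℕ) ∧ (x : ℕ) < 2 * i + 2 := by
  have hx := x.isLt
  simp only [InBlock, List.take_replicate, List.sum_replicate, smul_eq_mul]
  omega

lemma mem_type1_up {m : ℕ} (hm : n = 2 * m) (p q : Fin n) (hq : (q : ℕ) = (p : ℕ) + 1)
    (hp : Even (p : ℕ)) : unitaryT p q ∈ Type1 (List.replicate m 2) n := by
  refine ⟨(p : ℕ) / 2, p, q, hq, ?_, ?_, Or.inl rfl⟩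
  · rw [inBlock_iff hm]; rcases Nat.even_iff.1 hp with h; omega
  · rw [inBlock_iff hm]; rcases Nat.even_iff.1 hp with h; omega

lemma mem_type1_down {m : ℕ} (hm : n = 2 * m) (p q : Fin n) (hq : (q : ℕ) = (p : ℕ) + 1)
    (hp : Even (p : ℕ)) : unitaryT q p ∈ Type1 (List.replicate m 2) n := by
  refine ⟨(p : ℕ) / 2, p, q, hq, ?_, ?_, Or.inr rfl⟩
  · rw [inBlock_iff hm]; rcases Nat.even_iff.1 hp with h; omega
  · rw [inBlock_iff hm]; rcases Nat.even_iff.1 hp with h; omega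

lemma mem_type2 {m : ℕ} (hm : n = 2 * m) (q p : Fin n) (h : (q : ℕ) / 2 < (p : ℕ) / 2) :
    unitaryT q p ∈ Type2 (List.replicate m 2) n := by
  refine ⟨(q : ℕ) / 2, (p : ℕ) / 2, q, p, h, ?_, ?_, rfl⟩
  · rw [inBlock_iff hm]; omega
  · rw [inBlock_iff hm]; omega

lemma unitaryT_apply_self (p q : Fin n) : unitaryT p q p = q := by
  simp [unitaryT]

lemma unitaryT_apply_of_ne (p q x : Fin n) (h : x ≠ p) : unitaryT p q x = x := by
  simp [unitaryT, h]

lemma good_unitaryT (p q : Fin n) (h : (p : ℕ) / 2 ≤ (q : ℕ) / 2) : Good n (unitaryT p q) := by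
  constructor
  · intro x
    by_cases hx : x = p
    · subst hx; rw [unitaryT_apply_self]; exact h
    · rw [unitaryT_apply_of_ne p q x hx]
  · intro x y hx hy ⟨h1, h2⟩
    by_cases hxp : x = p
    · subst hxp
      have hyp : y ≠ x := by intro h; rw [h] at hy; omega
      rw [unitaryT_apply_of_ne x q y hyp] at h2
      rw [h2] at hy; omega
    · rw [unitaryT_apply_of_ne p q x hxp] at h1
      rw [h1] at hy; omega

lemma type_subset_good {m : ℕ} (hm : n = 2 * m) :
    Type1 (List.replicate m 2) n ∪ Type2 (List.replicate m 2) n ⊆ {f | Good n f} := by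
  rintro f (⟨i, p, q, hq, hp, hq', hor⟩ | ⟨i, j, q, p, hij, hq, hp, rfl⟩)
  · rw [inBlock_iff hm] at hp hq'
    rcases hor with rfl | rfl
    · exact good_unitaryT p q (by omega)
    · exact good_unitaryT q p (by omega)
  · rw [inBlock_iff hm] at hq hp
    exact good_unitaryT q p (by omega)

/-- The submonoid of Good transformations -/
def goodM (n : ℕ) : Submonoid (Function.End (Fin n)) where
  carrier := {f | Good n f}
  one_mem' := good_one
  mul_mem' := good_mul

/-- the hard direction -/
lemma good_mem_closure {m : ℕ} (hm : n = 2 * m) :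
    ∀ j, ∀ f : Function.End (Fin n), Good n f →
      (∀ x : Fin n, (x : ℕ) + 2 * j < n → f x = x) →
      f ∈ Submonoid.closure (Type1 (List.replicate m 2) n ∪ Type2 (List.replicate m 2) n) := by
  intro j
  induction j with
  | zero =>
    intro f hf hfix
    have : f = 1 := funext fun x => hfix x (by have := x.isLt; omega)
    rw [this]; exact Submonoid.one_mem _
  | succ j ih =>
    intro f hf hfix
    by_cases hj : 2 * (j + 1) ≤ n
    · set c := n - 2 * j - 2 with hc
      have hceven : c % 2 = 0 := by omega
      have hcn : c < n := by omega
      have hcn2 : c + 1 < n := by omega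
      set pc : Fin n := ⟨c, hcn⟩ with hpc
      set qc : Fin n := ⟨c + 1, hcn2⟩ with hqc
      have hpcv : (pc : ℕ) = c := rfl
      have hqcv : (qc : ℕ) = c + 1 := rfl
      have hpq : pc ≠ qc := by
        intro h; have := congrArg Fin.val h; rw [hpcv, hqcv] at this; omega
      -- the truncated map w
      set w : Function.End (Fin n) :=
        (fun x => if (x : ℕ) = c ∨ (x : ℕ) = c + 1 then x else f x) with hw
      have hwval : ∀ x : Fin n,
          w x = if (x : ℕ) = c ∨ (x : ℕ) = c + 1 then x else f x := fun _ => rfl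
      have hwgood : Good n w := by
        constructor
        · intro x
          rw [hwval]
          split
          · exact le_rfl
          · exact hf.1 x
        · intro x y hx hy ⟨h1, h2⟩
          rw [hwval] at h1 h2
          have hxv := Nat.even_iff.1 hx
          by_cases hxc : (x : ℕ) = c ∨ (x : ℕ) = c + 1
          · rw [if_pos hxc] at h1
            have := congrArg Fin.val h1
            omega
          · rw [not_or] at hxc
            by_cases hyc : (y : ℕ) = c ∨ (y : ℕ) = c + 1
            · rcases hyc with h | h <;> omega
            · rw [if_neg (not_or.2 hxc)] at h1
              rw [if_neg hyc] at h2
              exact hf.2 x y hx hy ⟨h1, h2⟩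
      have hwfix : ∀ x : Fin n, (x : ℕ) + 2 * j < n → w x = x := by
        intro x hx
        rw [hwval]
        by_cases hxc : (x : ℕ) = c ∨ (x : ℕ) = c + 1
        · rw [if_pos hxc]
        · rw [if_neg hxc, hfix x (by rw [not_or] at hxc; omega)]
      have hwM := ih w hwgood hwfix
      -- facts about the images of the block {c, c+1}
      have ha : c ≤ ((f pc : Fin n) : ℕ) := by
        have := hf.1 pc
        rw [hpcv] at this
        omega
      have hb : c ≤ ((f qc : Fin n) : ℕ) := by
        have := hf.1 qc
        rw [hqcv] at this
        omega
      have hnsw : ¬(((f pc : Fin n) : ℕ) = c + 1 ∧ ((f qc : Fin n) : ℕ) = c) := by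
        rintro ⟨h1, h2⟩
        exact hf.2 pc qc (Nat.even_iff.2 (by rw [hpcv]; omega)) (by rw [hpcv, hqcv])
          ⟨Fin.ext (by rw [h1, hqcv]), Fin.ext (by rw [h2, hpcv])⟩
      have hav := (f pc).isLt
      have hbv := (f qc).isLt
      -- generator membership helpers
      have g1 : unitaryT pc qc ∈ Submonoid.closure
          (Type1 (List.replicate m 2) n ∪ Type2 (List.replicate m 2) n) :=
        Submonoid.subset_closure (Or.inl (mem_type1_up hm pc qc (by rw [hpcv, hqcv])
          (Nat.even_iff.2 (by rw [hpcv]; omega))))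
      have g2 : unitaryT qc pc ∈ Submonoid.closure
          (Type1 (List.replicate m 2) n ∪ Type2 (List.replicate m 2) n) :=
        Submonoid.subset_closure (Or.inl (mem_type1_down hm pc qc (by rw [hpcv, hqcv])
          (Nat.even_iff.2 (by rw [hpcv]; omega))))
      have g3 : ∀ z : Fin n, c + 2 ≤ (z : ℕ) → unitaryT pc z ∈ Submonoid.closure
          (Type1 (List.replicate m 2) n ∪ Type2 (List.replicate m 2) n) := fun z hz =>
        Submonoid.subset_closure (Or.inr (mem_type2 hm pc z (by rw [hpcv]; omega)))
      have g4 : ∀ z : Fin n, c + 2 ≤ (z : ℕ) → unitaryT qc z ∈ Submonoid.closure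
          (Type1 (List.replicate m 2) n ∪ Type2 (List.replicate m 2) n) := fun z hz =>
        Submonoid.subset_closure (Or.inr (mem_type2 hm qc z (by rw [hqcv]; omega)))
      have hbqc : ∀ z : Fin n, c + 2 ≤ (z : ℕ) → z ≠ pc ∧ z ≠ qc := by
        intro z hz
        constructor <;> (intro h; have := congrArg Fin.val h; omega)
      -- construct u
      obtain ⟨u, huM, hu1, hu2, hu3⟩ :
          ∃ u, u ∈ Submonoid.closure
              (Type1 (List.replicate m 2) n ∪ Type2 (List.replicate m 2) n) ∧
            u pc = f pc ∧ u qc = f qc ∧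
            ∀ z : Fin n, z ≠ pc → z ≠ qc → u z = z := by
        rcases show ((f pc : Fin n) : ℕ) = c ∨ ((f pc : Fin n) : ℕ) = c + 1 ∨
            c + 2 ≤ ((f pc : Fin n) : ℕ) by omega with hA | hA | hA
        · -- f pc = pc
          have hfa : f pc = pc := Fin.ext (by rw [hA, hpcv])
          rcases show ((f qc : Fin n) : ℕ) = c ∨ ((f qc : Fin n) : ℕ) = c + 1 ∨
              c + 2 ≤ ((f qc : Fin n) : ℕ) by omega with hB | hB | hB
          · refine ⟨unitaryT qc pc, g2, ?_, ?_, ?_⟩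
            · rw [unitaryT_apply_of_ne _ _ _ hpq, hfa]
            · rw [unitaryT_apply_self]
              exact ((Fin.ext (by rw [hB, hpcv]) : f qc = pc)).symm
            · intro z _ hz2; exact unitaryT_apply_of_ne _ _ _ hz2
          · refine ⟨1, Submonoid.one_mem _, ?_, ?_, fun z _ _ => rfl⟩
            · rw [hfa]; rfl
            · have hfb : f qc = qc := Fin.ext (by rw [hB, hqcv])
              rw [hfb]; rfl
          · refine ⟨unitaryT qc (f qc), g4 _ hB, ?_, ?_, ?_⟩
            · rw [unitaryT_apply_of_ne _ _ _ hpq, hfa]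
            · rw [unitaryT_apply_self]
            · intro z _ hz2; exact unitaryT_apply_of_ne _ _ _ hz2
        · -- f pc = qc
          have hfa : f pc = qc := Fin.ext (by rw [hA, hqcv])
          rcases show ((f qc : Fin n) : ℕ) = c ∨ ((f qc : Fin n) : ℕ) = c + 1 ∨
              c + 2 ≤ ((f qc : Fin n) : ℕ) by omega with hB | hB | hB
          · exact absurd ⟨hA, hB⟩ hnsw
          · refine ⟨unitaryT pc qc, g1, ?_, ?_, ?_⟩
            · rw [unitaryT_apply_self, hfa]
            · rw [unitaryT_apply_of_ne _ _ _ (Ne.symm hpq)]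
              exact (Fin.ext (by rw [hqcv, hB])).symm
            · intro z hz1 _; exact unitaryT_apply_of_ne _ _ _ hz1
          · refine ⟨unitaryT pc qc * unitaryT qc (f qc), Submonoid.mul_mem _ g1 (g4 _ hB),
              ?_, ?_, ?_⟩
            · rw [mul_apply, unitaryT_apply_of_ne qc (f qc) pc hpq, unitaryT_apply_self, hfa]
            · rw [mul_apply, unitaryT_apply_self,
                unitaryT_apply_of_ne pc qc (f qc) (hbqc _ hB).1]
            · intro z hz1 hz2
              rw [mul_apply, unitaryT_apply_of_ne _ _ _ hz2, unitaryT_apply_of_ne _ _ _ hz1]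
        · -- f pc in a later block
          rcases show ((f qc : Fin n) : ℕ) = c ∨ ((f qc : Fin n) : ℕ) = c + 1 ∨
              c + 2 ≤ ((f qc : Fin n) : ℕ) by omega with hB | hB | hB
          · have hfb : f qc = pc := Fin.ext (by rw [hB, hpcv])
            refine ⟨unitaryT qc pc * unitaryT pc (f pc), Submonoid.mul_mem _ g2 (g3 _ hA),
              ?_, ?_, ?_⟩
            · rw [mul_apply, unitaryT_apply_self, unitaryT_apply_of_ne qc pc (f pc)
                (hbqc _ hA).2]
            · rw [mul_apply, unitaryT_apply_of_ne pc (f pc) qc (Ne.symm hpq),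
                unitaryT_apply_self, hfb]
            · intro z hz1 hz2
              rw [mul_apply, unitaryT_apply_of_ne _ _ _ hz1, unitaryT_apply_of_ne _ _ _ hz2]
          · have hfb : f qc = qc := Fin.ext (by rw [hB, hqcv])
            refine ⟨unitaryT pc (f pc), g3 _ hA, ?_, ?_, ?_⟩
            · rw [unitaryT_apply_self]
            · rw [unitaryT_apply_of_ne _ _ _ (Ne.symm hpq), hfb]
            · intro z hz1 _; exact unitaryT_apply_of_ne _ _ _ hz1
          · refine ⟨unitaryT pc (f pc) * unitaryT qc (f qc),
              Submonoid.mul_mem _ (g3 _ hA) (g4 _ hB), ?_, ?_, ?_⟩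
            · rw [mul_apply, unitaryT_apply_of_ne qc (f qc) pc hpq, unitaryT_apply_self]
            · rw [mul_apply, unitaryT_apply_self,
                unitaryT_apply_of_ne pc (f pc) (f qc) (hbqc _ hB).1]
            · intro z hz1 hz2
              rw [mul_apply, unitaryT_apply_of_ne _ _ _ hz2, unitaryT_apply_of_ne _ _ _ hz1]
      -- f = u * w
      have hfw : f = u * w := by
        funext x
        show f x = u (w x)
        rcases show (x : ℕ) = c ∨ (x : ℕ) = c + 1 ∨ (x : ℕ) < c ∨ c + 2 ≤ (x : ℕ) by omega
          with hx | hx | hx | hx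
        · have hxp : x = pc := Fin.ext (by rw [hx, hpcv])
          rw [hxp, hwval, if_pos (Or.inl hpcv), hu1]
        · have hxq : x = qc := Fin.ext (by rw [hx, hqcv])
          rw [hxq, hwval, if_pos (Or.inr hqcv), hu2]
        · have hfx : f x = x := hfix x (by omega)
          rw [hwval, if_neg (by omega), hfx, hu3 x
            (by intro h; have := congrArg Fin.val h; omega)
            (by intro h; have := congrArg Fin.val h; omega)]
        · have hfar : c + 2 ≤ ((f x : Fin n) : ℕ) := by
            have := hf.1 x
            omega
          rw [hwval, if_neg (by omega), hu3 (f x) (hbqc _ hfar).1 (hbqc _ hfar).2]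
      rw [hfw]
      exact Submonoid.mul_mem _ huM hwM
    · exact ih f hf (fun x hx => absurd hx (by omega))

lemma closure_eq {m : ℕ} (hm : n = 2 * m) :
    Submonoid.closure (Type1 (List.replicate m 2) n ∪ Type2 (List.replicate m 2) n) = goodM n := by
  apply le_antisymm
  · exact Submonoid.closure_le.2 (type_subset_good hm)
  · intro f hf
    exact good_mem_closure hm n f hf (fun x hx => by omega)

/-! ### counting -/

def PB{m n : ℕ} (i : Fin m) (p : Fin n × Fin n) : Prop :=
  (i : ℕ) ≤ (p.1 : ℕ) / 2 ∧ (i : ℕ) ≤ (p.2 : ℕ) / 2 ∧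
    ¬((p.1 : ℕ) = 2 * i + 1 ∧ (p.2 : ℕ) = 2 * i)

instance (i : Fin m) : DecidablePred (fun p : Fin n × Fin n => PB i p) := fun p =>
  decidable_of_iff ((i : ℕ) ≤ (p.1 : ℕ) / 2 ∧ (i : ℕ) ≤ (p.2 : ℕ) / 2 ∧
    ¬((p.1 : ℕ) = 2 * i + 1 ∧ (p.2 : ℕ) = 2 * i)) Iff.rfl

def dd (hm : n = 2 * m) (i : Fin m) : Fin n := ⟨2 * i, by have := i.isLt; omega⟩
def ee (hm : n = 2 * m) (i : Fin m) : Fin n := ⟨2 * i + 1, by have := i.isLt; omega⟩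
def blkIdx (hm : n = 2 * m) (x : Fin n) : Fin m := ⟨(x : ℕ) / 2, by have := x.isLt; omega⟩

lemma dd_val (hm : n = 2 * m) (i : Fin m) : ((dd hm i : Fin n) : ℕ) = 2 * (i : ℕ) := rfl
lemma ee_val (hm : n = 2 * m) (i : Fin m) : ((ee hm i : Fin n) : ℕ) = 2 * (i : ℕ) + 1 := rfl
lemma blkIdx_val (hm : n = 2 * m) (x : Fin n) : ((blkIdx hm x : Fin m) : ℕ) = (x : ℕ) / 2 := rfl

lemma good_iff (hm : n = 2 * m) (f : Function.End (Fin n)) :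
    Good n f ↔ ∀ i : Fin m, PB i (f (dd hm i), f (ee hm i)) := by
  constructor
  · rintro ⟨bm, ns⟩ i
    have h1 := bm (dd hm i)
    have h2 := bm (ee hm i)
    rw [dd_val] at h1
    rw [ee_val] at h2
    dsimp only [PB]
    refine ⟨by omega, by omega, ?_⟩
    rintro ⟨ha, hb⟩
    refine ns (dd hm i) (ee hm i) (by rw [dd_val]; exact ⟨(i : ℕ), two_mul _⟩)
      (by rw [dd_val, ee_val]) ⟨?_, ?_⟩
    · exact Fin.ext (by rw [ee_val]; exact ha)
    · exact Fin.ext (by rw [dd_val]; exact hb)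
  · intro h
    constructor
    · intro x
      have hx := x.isLt
      rcases Nat.even_or_odd (x : ℕ) with he | ho
      · have h2 := Nat.even_iff.1 he
        have hxd : x = dd hm (blkIdx hm x) :=
          Fin.ext (by rw [dd_val, blkIdx_val]; omega)
        rw [hxd, dd_val, blkIdx_val]
        have hP := h (blkIdx hm x)
        dsimp only [PB] at hP
        have := hP.1
        rw [blkIdx_val] at this
        omega
      · have h2 := Nat.odd_iff.1 ho
        have hxe : x = ee hm (blkIdx hm x) :=
          Fin.ext (by rw [ee_val, blkIdx_val]; omega)
        rw [hxe, ee_val, blkIdx_val]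
        have hP := h (blkIdx hm x)
        dsimp only [PB] at hP
        have := hP.2.1
        rw [blkIdx_val] at this
        omega
    · intro x y hxe hy ⟨h1, h2⟩
      have hx := x.isLt
      have h2' := Nat.even_iff.1 hxe
      have hxd : x = dd hm (blkIdx hm x) :=
        Fin.ext (by rw [dd_val, blkIdx_val]; omega)
      have hye : y = ee hm (blkIdx hm x) :=
        Fin.ext (by rw [ee_val, blkIdx_val]; omega)
      have hP := h (blkIdx hm x)
      dsimp only [PB] at hP
      refine hP.2.2 ⟨?_, ?_⟩
      · rw [← hxd, h1, hye, ee_val]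
      · rw [← hye, h2, blkIdx_val]
        omega

def pairEquiv (hm : n = 2 * m) :
    {f : Function.End (Fin n) // Good n f} ≃ ∀ i : Fin m, {p : Fin n × Fin n // PB i p} where
  toFun f i := ⟨(f.1 (dd hm i), f.1 (ee hm i)), (good_iff hm f.1).1 f.2 i⟩
  invFun g := ⟨(fun x => if (x : ℕ) % 2 = 0 then (g (blkIdx hm x)).1.1
      else (g (blkIdx hm x)).1.2 : Function.End (Fin n)), by
    apply (good_iff hm _).2
    intro i
    have hd : blkIdx hm (dd hm i) = i := Fin.ext (by rw [blkIdx_val, dd_val]; omega)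
    have he : blkIdx hm (ee hm i) = i := Fin.ext (by rw [blkIdx_val, ee_val]; omega)
    have h1 : ((dd hm i : Fin n) : ℕ) % 2 = 0 := by rw [dd_val]; omega
    have h2 : ((ee hm i : Fin n) : ℕ) % 2 = 1 := by rw [ee_val]; omega
    show PB i (if ((dd hm i : Fin n) : ℕ) % 2 = 0 then _ else _,
      if ((ee hm i : Fin n) : ℕ) % 2 = 0 then _ else _)
    rw [if_pos h1, if_neg (by omega), hd, he]
    exact (g i).2⟩
  left_inv f := by
    apply Subtype.ext
    funext x
    show (if (x : ℕ) % 2 = 0 then f.1 (dd hm (blkIdx hm x)) else f.1 (ee hm (blkIdx hm x))) = f.1 x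
    have hx := x.isLt
    rcases Nat.even_or_odd (x : ℕ) with he | ho
    · have h2 := Nat.even_iff.1 he
      rw [if_pos h2]
      have hde : dd hm (blkIdx hm x) = x := Fin.ext (by rw [dd_val, blkIdx_val]; omega)
      rw [hde]
    · have h2 := Nat.odd_iff.1 ho
      rw [if_neg (by omega)]
      have hde : ee hm (blkIdx hm x) = x := Fin.ext (by rw [ee_val, blkIdx_val]; omega)
      rw [hde]
  right_inv g := by
    funext i
    apply Subtype.ext
    have hd : blkIdx hm (dd hm i) = i := Fin.ext (by rw [blkIdx_val, dd_val]; omega)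
    have he : blkIdx hm (ee hm i) = i := Fin.ext (by rw [blkIdx_val, ee_val]; omega)
    have h1 : ((dd hm i : Fin n) : ℕ) % 2 = 0 := by rw [dd_val]; omega
    have h2 : ((ee hm i : Fin n) : ℕ) % 2 = 1 := by rw [ee_val]; omega
    show ((if ((dd hm i : Fin n) : ℕ) % 2 = 0 then _ else _ : Fin n),
      (if ((ee hm i : Fin n) : ℕ) % 2 = 0 then _ else _ : Fin n)) = (g i).1
    rw [if_pos h1, if_neg (by omega), hd, he]

lemma card_PB (hm : n = 2 * m) (i : Fin m) :
    Nat.card {p : Fin n × Fin n // PB i p} = (n - 2 * (i : ℕ)) ^ 2 - 1 := by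
  classical
  rw [Nat.card_eq_fintype_card, Fintype.card_subtype]
  have him : (i : ℕ) < m := i.isLt
  have hq : 2 * (i : ℕ) + 1 < n := by omega
  set s : Finset (Fin n) := Finset.univ.filter (fun a : Fin n => 2 * (i : ℕ) ≤ (a : ℕ)) with hs
  have hmems : ∀ a : Fin n, a ∈ s ↔ 2 * (i : ℕ) ≤ (a : ℕ) := by
    intro a; rw [hs, Finset.mem_filter]; simp
  have hscard : s.card = n - 2 * (i : ℕ) := by
    have : s = Finset.attachFin (Finset.Ico (2 * (i : ℕ)) n)
        (fun x hx => (Finset.mem_Ico.1 hx).2) := by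
      ext a
      rw [hmems, Finset.mem_attachFin, Finset.mem_Ico]
      have := a.isLt
      omega
    rw [this, Finset.card_attachFin, Nat.card_Ico]
  have hmem : ((⟨2 * (i : ℕ) + 1, hq⟩ : Fin n), (⟨2 * (i : ℕ), by omega⟩ : Fin n)) ∈ s ×ˢ s := by
    rw [Finset.mem_product]
    refine ⟨?_, ?_⟩
    · rw [hmems]
      show 2 * (i : ℕ) ≤ 2 * (i : ℕ) + 1
      omega
    · rw [hmems]
  have hfe : Finset.univ.filter (fun p : Fin n × Fin n => PB i p) =
      (s ×ˢ s).erase ((⟨2 * (i : ℕ) + 1, hq⟩ : Fin n), (⟨2 * (i : ℕ), by omega⟩ : Fin n)) := by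
    ext p
    rw [Finset.mem_filter, Finset.mem_erase, Finset.mem_product, hmems, hmems]
    simp only [Finset.mem_univ, true_and]
    constructor
    · rintro ⟨ha, hb, hc⟩
      refine ⟨?_, by omega, by omega⟩
      intro hpz
      exact hc (by rw [hpz]; exact ⟨rfl, rfl⟩)
    · rintro ⟨hne, ha, hb⟩
      refine ⟨by omega, by omega, ?_⟩
      rintro ⟨h1, h2⟩
      exact hne (Prod.ext (Fin.ext h1) (Fin.ext h2))
  rw [hfe, Finset.card_erase_of_mem hmem, Finset.card_product, hscard, sq]

lemma card_good (hm : n = 2 * m) :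
    Nat.card {f : Function.End (Fin n) // Good n f} =
      ∏ i : Fin m, ((n - 2 * (i : ℕ)) ^ 2 - 1) := by
  rw [Nat.card_congr (pairEquiv hm), Nat.card_pi]
  exact Finset.prod_congr rfl (fun i _ => card_PB hm i)

lemma prod_eq (m : ℕ) :
    2 ^ (2 * m) * m.factorial ^ 2 * ∏ i : Fin m, ((2 * m - 2 * (i : ℕ)) ^ 2 - 1) =
      (2 * m).factorial * (2 * m + 1).factorial := by
  induction m with
  | zero => simp
  | succ m ih =>
    rw [Fin.prod_univ_succ]
    have hre : ∀ i : Fin m, (2 * (m+1) - 2 * ((i.succ : Fin (m+1)) : ℕ)) ^ 2 - 1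
        = (2 * m - 2 * (i : ℕ)) ^ 2 - 1 := by
      intro i
      congr 2
      simp [Fin.val_succ]
      omega
    rw [Finset.prod_congr rfl (fun i _ => hre i)]
    have h0 : ((2 * (m+1) - 2 * ((0 : Fin (m+1)) : ℕ)) ^ 2 - 1) = (2*m+2)^2 - 1 := by
      congr 1
    rw [h0]
    have e1 : (2*(m+1)).factorial = (2*m).factorial * ((2*m+1) * (2*m+2)) := by
      have : 2*(m+1) = (2*m+1) + 1 := by ring
      rw [this, Nat.factorial_succ, Nat.factorial_succ]
      ring
    have e2 : (2*(m+1)+1).factorial = (2*m+1).factorial * ((2*m+2) * (2*m+3)) := by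
      have : 2*(m+1)+1 = (2*m+2) + 1 := by ring
      rw [this, Nat.factorial_succ, Nat.factorial_succ]
      ring
    rw [e1, e2]
    have e3 : (m+1).factorial = (m+1) * m.factorial := Nat.factorial_succ m
    have e4 : (2*m+2)^2 - 1 = (2*m+1)*(2*m+3) := by
      have : (2*m+2)^2 = (2*m+1)*(2*m+3)+1 := by ring
      omega
    have e5 : (2:ℕ)^(2*(m+1)) = 4 * 2^(2*m) := by
      rw [show 2*(m+1) = 2*m+2 by ring, pow_add]; ring
    rw [e3, e4, e5]
    set P := ∏ i : Fin m, ((2 * m - 2 * (i : ℕ)) ^ 2 - 1) with hP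
    calc 4 * 2^(2*m) * ((m+1) * m.factorial)^2 * ((2*m+1)*(2*m+3) * P)
        = (4*(m+1)^2*((2*m+1)*(2*m+3))) * (2^(2*m) * m.factorial^2 * P) := by ring
      _ = (4*(m+1)^2*((2*m+1)*(2*m+3))) * ((2*m).factorial * (2*m+1).factorial) := by rw [ih]
      _ = (2*m).factorial * ((2*m+1)*(2*m+2)) * ((2*m+1).factorial * ((2*m+2)*(2*m+3))) := by ring

end St13

/-- For even `n ≥ 2` and the composition `(2,2,…,2)` of `n` into `n/2` parts, the
submonoid of transformations of `Q_n` generated by all Type 1 and Type 2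
transformations, together with the identity, is aperiodic and has cardinality exactly
`n!·(n+1)!/(2^n·((n/2)!)^2)`; in particular, the size of the maximal aperiodic unitary
semigroup on `n` states is at least this number. -/
theorem statement13 (n : ℕ) (hn : 2 ≤ n) (heven : Even n) :
    (∀ s ∈ Submonoid.closure (Type1 (List.replicate (n / 2) 2) n ∪
        Type2 (List.replicate (n / 2) 2) n), ∃ k : ℕ, 1 ≤ k ∧ s ^ (k + 1) = s ^ k) ∧
    Nat.card (Submonoid.closure (Type1 (List.replicate (n / 2) 2) n ∪
        Type2 (List.replicate (n / 2) 2) n)) =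
      Nat.factorial n * Nat.factorial (n + 1) /
        (2 ^ n * (Nat.factorial (n / 2)) ^ 2) ∧
    ∃ T : Set (Function.End (Fin n)),
      (∀ t ∈ T, ∃ p q : Fin n, p ≠ q ∧ t = unitaryT p q) ∧
      (∀ s ∈ Submonoid.closure T, ∃ k : ℕ, 1 ≤ k ∧ s ^ (k + 1) = s ^ k) ∧
      Nat.factorial n * Nat.factorial (n + 1) / (2 ^ n * (Nat.factorial (n / 2)) ^ 2) ≤
        Nat.card (Submonoid.closure T) := by
  obtain ⟨m, hm⟩ := heven
  have hm : n = 2 * m := by omega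
  have hm2 : n / 2 = m := by omega
  rw [hm2]
  have hsub := St13.type_subset_good (n := n) hm
  have haper : ∀ s ∈ Submonoid.closure (Type1 (List.replicate m 2) n ∪
      Type2 (List.replicate m 2) n), ∃ k : ℕ, 1 ≤ k ∧ s ^ (k + 1) = s ^ k := by
    intro s hs
    have hgood : St13.Good n s := by
      rw [St13.closure_eq hm] at hs
      exact hs
    exact ⟨n + 1, by omega, St13.good_aperiodic hm hgood⟩
  have hcard : Nat.card (Submonoid.closure (Type1 (List.replicate m 2) n ∪
        Type2 (List.replicate m 2) n)) =
      Nat.factorial n * Nat.factorial (n + 1) / (2 ^ n * (Nat.factorial m) ^ 2) := by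
    have h1 : Nat.card (Submonoid.closure (Type1 (List.replicate m 2) n ∪
        Type2 (List.replicate m 2) n)) = Nat.card {f : Function.End (Fin n) // St13.Good n f} := by
      rw [St13.closure_eq hm]
      rfl
    rw [h1, St13.card_good hm]
    have key := St13.prod_eq m
    rw [← hm] at key
    have hpos : 0 < 2 ^ n * (Nat.factorial m) ^ 2 :=
      Nat.mul_pos (Nat.pow_pos (by omega)) (Nat.pow_pos (Nat.factorial_pos m))
    rw [← key]
    exact (Nat.mul_div_cancel_left _ hpos).symm
  refine ⟨haper, hcard, Type1 (List.replicate m 2) n ∪ Type2 (List.replicate m 2) n, ?_, haper, le_of_eq hcard.symm⟩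
  rintro t (⟨i, p, q, hq, hp, hq', hor⟩ | ⟨i, j, q, p, hij, hq, hp, rfl⟩)
  · rcases hor with rfl | rfl
    · exact ⟨p, q, fun h => by rw [h] at hq; omega, rfl⟩
    · exact ⟨q, p, fun h => by rw [h] at hq; omega, rfl⟩
  · rw [St13.inBlock_iff hm] at hq hp
    exact ⟨q, p, fun h => by rw [h] at hq; omega, rfl⟩
end
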